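/- arXiv:1506.04079 — 4 statements merged into one kernel-verified Lean document; each statement's English description precedes it below -/
import Mathlib

section
/- Let f and g be continuous, piecewise continuously differentiable functions on [a,b] with g(t) ≤ f(t) for all t ∈ (a,b), f(a) = g(a), f(b) = g(b), and g not identically equal to f on [a,b]. If f is convex and monotonically increasing on [a,b], then len(f) < len(g), i.e. ∫ₐᵇ √(1 + f′(t)²) dt < ∫ₐᵇ √(1 + g′(t)²) dt. -/
open MeasureTheory

open Set Filter Function


lemma aux_sqrt_pos (x : ℝ) : 0 < Real.sqrt (1 + x ^ 2) :=
  Real.sqrt_pos.2 (by positivity)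

lemma aux_sq_sqrt (x : ℝ) : Real.sqrt (1 + x ^ 2) ^ 2 = 1 + x ^ 2 :=
  Real.sq_sqrt (by positivity)

lemma aux_abs_le (x : ℝ) : |x| ≤ Real.sqrt (1 + x ^ 2) := by
  rw [← Real.sqrt_sq_eq_abs]
  exact Real.sqrt_le_sqrt (by nlinarith)

lemma aux_mul_ge (x y : ℝ) : 1 + x * y ≤ Real.sqrt (1 + x ^ 2) * Real.sqrt (1 + y ^ 2) := by
  have hx := aux_sq_sqrt x
  have hy := aux_sq_sqrt y
  have h1 := aux_sqrt_pos x
  have h2 := aux_sqrt_pos y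
  nlinarith [sq_nonneg (x - y), sq_nonneg (Real.sqrt (1 + x ^ 2) * Real.sqrt (1 + y ^ 2) - (1 + x * y)), mul_pos h1 h2]

lemma aux_mul_gt (x y : ℝ) (h : x ≠ y) :
    1 + x * y < Real.sqrt (1 + x ^ 2) * Real.sqrt (1 + y ^ 2) := by
  have hx := aux_sq_sqrt x
  have hy := aux_sq_sqrt y
  have h1 := aux_sqrt_pos x
  have h2 := aux_sqrt_pos y
  have hxy : 0 < (x - y) ^ 2 := by
    have : x - y ≠ 0 := sub_ne_zero.2 h
    positivity
  nlinarith [mul_pos h1 h2, hxy]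

lemma aux_tangent (x y : ℝ) :
    Real.sqrt (1 + x ^ 2) + x / Real.sqrt (1 + x ^ 2) * (y - x) ≤ Real.sqrt (1 + y ^ 2) := by
  have h1 := aux_sqrt_pos x
  rw [← le_sub_iff_add_le', div_mul_eq_mul_div, div_le_iff₀ h1]
  nlinarith [aux_mul_ge x y, aux_sq_sqrt x]

lemma aux_tangent_lt (x y : ℝ) (h : x ≠ y) :
    Real.sqrt (1 + x ^ 2) + x / Real.sqrt (1 + x ^ 2) * (y - x) < Real.sqrt (1 + y ^ 2) := by
  have h1 := aux_sqrt_pos x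
  rw [← lt_sub_iff_add_lt', div_mul_eq_mul_div, div_lt_iff₀ h1]
  nlinarith [aux_mul_gt x y h, aux_sq_sqrt x]

lemma aux_ratio_abs_le (x : ℝ) : |x / Real.sqrt (1 + x ^ 2)| ≤ 1 := by
  rw [abs_div, abs_of_pos (aux_sqrt_pos x), div_le_one (aux_sqrt_pos x)]
  exact aux_abs_le x

lemma aux_ratio_mono : Monotone (fun u : ℝ => u / Real.sqrt (1 + u ^ 2)) := by
  have hd : ∀ u : ℝ, HasDerivAt (fun u : ℝ => u / Real.sqrt (1 + u ^ 2))
      ((Real.sqrt (1 + u ^ 2) - u * (u / Real.sqrt (1 + u ^ 2))) / Real.sqrt (1 + u ^ 2) ^ 2) u := by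
    intro u
    have hs : HasDerivAt (fun u : ℝ => Real.sqrt (1 + u ^ 2)) (u / Real.sqrt (1 + u ^ 2)) u := by
      have h0 : HasDerivAt (fun u : ℝ => 1 + u ^ 2) (2 * u) u := by
        simpa using ((hasDerivAt_pow 2 u).const_add 1)
      have := (Real.hasDerivAt_sqrt (x := 1 + u ^ 2) (by positivity)).comp u h0
      refine this.congr_deriv ?_
      field_simp
    exact ((hasDerivAt_id' u).div hs (ne_of_gt (aux_sqrt_pos u))).congr_deriv (by simp)
  apply monotone_of_deriv_nonneg
  · exact fun u => (hd u).differentiableAt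
  · intro u
    rw [(hd u).deriv]
    have h1 := aux_sqrt_pos u
    have h2 := aux_sq_sqrt u
    have : Real.sqrt (1 + u ^ 2) - u * (u / Real.sqrt (1 + u ^ 2))
        = 1 / Real.sqrt (1 + u ^ 2) := by
      field_simp
      nlinarith
    rw [this]
    positivity

/-- let `f, g` be continuous, piecewise continuously differentiable
functions on `[a,b]` (differentiable with continuous derivative off finite sets,
with derivative functions `f', g'`), with `g ≤ f` on `(a,b)`, equal endpoints, and
`g` not identically `f`.  If `f` is convex and monotonically increasing on `[a,b]`,
then the arc length of `f` is strictly smaller than the arc length of `g`. -/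
theorem arclength_lt_of_convex_increasing
    (a b : ℝ) (hab : a < b) (f g f' g' : ℝ → ℝ)
    (hfc : ContinuousOn f (Set.Icc a b)) (hgc : ContinuousOn g (Set.Icc a b))
    (Ff Fg : Finset ℝ)
    (hfd : ∀ t ∈ Set.Icc a b, t ∉ Ff → HasDerivAt f (f' t) t)
    (hgd : ∀ t ∈ Set.Icc a b, t ∉ Fg → HasDerivAt g (g' t) t)
    (hf'c : ∀ t ∈ Set.Icc a b, t ∉ Ff → ContinuousAt f' t)
    (hg'c : ∀ t ∈ Set.Icc a b, t ∉ Fg → ContinuousAt g' t)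
    (hfint : IntervalIntegrable (fun t => Real.sqrt (1 + (f' t) ^ 2)) volume a b)
    (hgint : IntervalIntegrable (fun t => Real.sqrt (1 + (g' t) ^ 2)) volume a b)
    (hle : ∀ t ∈ Set.Ioo a b, g t ≤ f t)
    (hga : f a = g a) (hgb : f b = g b)
    (hne : ∃ t ∈ Set.Icc a b, g t ≠ f t)
    (hconv : ConvexOn ℝ (Set.Icc a b) f)
    (hmono : MonotoneOn f (Set.Icc a b)) :
    (∫ t in a..b, Real.sqrt (1 + (f' t) ^ 2)) <
      ∫ t in a..b, Real.sqrt (1 + (g' t) ^ 2) := by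
  classical
  have hable : a ≤ b := hab.le
  set ν : Measure ℝ := volume.restrict (Set.Ioc a b) with hν
  set F' : ℝ → ℝ := fun t => g' t - f' t with hF'
  -- a.e. goodness
  have hgood : ∀ᵐ t ∂ν, t ∈ Set.Ioc a b ∧ t ∉ (Ff : Set ℝ) ∧ t ∉ (Fg : Set ℝ) := by
    have h1 : ∀ᵐ t ∂ν, t ∈ Set.Ioc a b := ae_restrict_mem measurableSet_Ioc
    have h2 : ∀ᵐ t ∂(volume : Measure ℝ), t ∉ (Ff : Set ℝ) :=
      measure_eq_zero_iff_ae_notMem.1 (Ff.finite_toSet.measure_zero _)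
    have h3 : ∀ᵐ t ∂(volume : Measure ℝ), t ∉ (Fg : Set ℝ) :=
      measure_eq_zero_iff_ae_notMem.1 (Fg.finite_toSet.measure_zero _)
    filter_upwards [h1, ae_restrict_of_ae h2, ae_restrict_of_ae h3] with t ht h2 h3
    exact ⟨ht, h2, h3⟩
  have hIcc : Set.Ioc a b ⊆ Set.Icc a b := Set.Ioc_subset_Icc_self
  have hfd_ae : ∀ᵐ t ∂ν, deriv f t = f' t := by
    filter_upwards [hgood] with t ⟨ht, hf, _⟩
    exact (hfd t (hIcc ht) hf).deriv
  have hgd_ae : ∀ᵐ t ∂ν, deriv g t = g' t := by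
    filter_upwards [hgood] with t ⟨ht, _, hg⟩
    exact (hgd t (hIcc ht) hg).deriv
  -- integrability
  have hfIntOn : Integrable (fun t => Real.sqrt (1 + f' t ^ 2)) ν :=
    (intervalIntegrable_iff_integrableOn_Ioc_of_le hable).1 hfint
  have hgIntOn : Integrable (fun t => Real.sqrt (1 + g' t ^ 2)) ν :=
    (intervalIntegrable_iff_integrableOn_Ioc_of_le hable).1 hgint
  have hf'meas : AEStronglyMeasurable f' ν :=
    (measurable_deriv f).aestronglyMeasurable.congr hfd_ae
  have hg'meas : AEStronglyMeasurable g' ν :=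
    (measurable_deriv g).aestronglyMeasurable.congr hgd_ae
  have hf'int : Integrable f' ν := by
    refine hfIntOn.mono hf'meas (ae_of_all _ fun t => ?_)
    rw [Real.norm_eq_abs, Real.norm_eq_abs, abs_of_nonneg (Real.sqrt_nonneg _)]
    exact aux_abs_le (f' t)
  have hg'int : Integrable g' ν := by
    refine hgIntOn.mono hg'meas (ae_of_all _ fun t => ?_)
    rw [Real.norm_eq_abs, Real.norm_eq_abs, abs_of_nonneg (Real.sqrt_nonneg _)]
    exact aux_abs_le (g' t)
  have hF'int : Integrable F' ν := hg'int.sub hf'int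
  have hF'meas : AEStronglyMeasurable F' ν := hF'int.aestronglyMeasurable
  have hF'measD : ∀ᵐ t ∂ν, deriv g t - deriv f t = F' t := by
    filter_upwards [hfd_ae, hgd_ae] with t h1 h2
    rw [hF', h1, h2]
  -- FTC
  have hFTC : ∀ s ∈ Set.Icc a b, ∫ t in Set.Ioc s b, F' t = (g b - f b) - (g s - f s) := by
    intro s hs
    have hsb : s ≤ b := hs.2
    have hii : IntervalIntegrable F' volume s b := by
      rw [intervalIntegrable_iff_integrableOn_Ioc_of_le hsb]
      exact MeasureTheory.IntegrableOn.mono_set hF'int (Set.Ioc_subset_Ioc_left hs.1)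
    have hcont : ContinuousOn (fun t => g t - f t) (Set.Icc s b) :=
      (hgc.sub hfc).mono (Set.Icc_subset_Icc_left hs.1)
    have hderiv : ∀ x ∈ Set.Ioo s b \ ((Ff : Set ℝ) ∪ (Fg : Set ℝ)),
        HasDerivAt (fun t => g t - f t) (F' x) x := by
      intro x hx
      have hxI : x ∈ Set.Icc a b := ⟨hs.1.trans hx.1.1.le, hx.1.2.le⟩
      exact (hgd x hxI (fun h => hx.2 (Or.inr h))).sub (hfd x hxI (fun h => hx.2 (Or.inl h)))
    have hcnt : ((Ff : Set ℝ) ∪ (Fg : Set ℝ)).Countable :=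
      Ff.countable_toSet.union Fg.countable_toSet
    have := MeasureTheory.integral_eq_of_hasDerivAt_off_countable_of_le
      (fun t => g t - f t) F' hsb hcnt hcont hderiv hii
    rw [intervalIntegral.integral_of_le hsb] at this
    exact this
  -- phi and its monotone surrogate
  set φ : ℝ → ℝ := fun t => f' t / Real.sqrt (1 + f' t ^ 2) with hφdef
  set good : Set ℝ := Set.Icc a b \ (Ff : Set ℝ) with hgooddef
  have hf'mono : ∀ ⦃x⦄, x ∈ good → ∀ ⦃y⦄, y ∈ good → x ≤ y → f' x ≤ f' y := by
    intro x hx y hy hxy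
    rcases eq_or_lt_of_le hxy with rfl | h
    · exact le_refl _
    · have hdx : deriv f x = f' x := (hfd x hx.1 hx.2).deriv
      have hdy : deriv f y = f' y := (hfd y hy.1 hy.2).deriv
      calc f' x = deriv f x := hdx.symm
        _ ≤ slope f x y := hconv.deriv_le_slope hx.1 hy.1 h (hfd x hx.1 hx.2).differentiableAt
        _ ≤ deriv f y := hconv.slope_le_deriv hx.1 hy.1 h (hfd y hy.1 hy.2).differentiableAt
        _ = f' y := hdy
  have hφgood : ∀ ⦃x⦄, x ∈ good → ∀ ⦃y⦄, y ∈ good → x ≤ y → φ x ≤ φ y := by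
    intro x hx y hy hxy
    exact aux_ratio_mono (hf'mono hx hy hxy)
  set φm : ℝ → ℝ := fun t => sSup (insert (-1 : ℝ) (φ '' (good ∩ Set.Iic t))) with hφmdef
  have hφm_bdd : ∀ t : ℝ, BddAbove (insert (-1 : ℝ) (φ '' (good ∩ Set.Iic t))) := by
    intro t
    refine ⟨1, ?_⟩
    rintro z (rfl | ⟨s, _, rfl⟩)
    · norm_num
    · exact (abs_le.1 (aux_ratio_abs_le (f' s))).2
  have hφm_mono : Monotone φm := by
    intro x y hxy
    refine csSup_le_csSup (hφm_bdd y) (Set.insert_nonempty _ _) ?_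
    exact Set.insert_subset_insert (Set.image_mono (Set.inter_subset_inter_right _ (Set.Iic_subset_Iic.2 hxy)))
  have hφm_eq : ∀ t ∈ good, φm t = φ t := by
    intro t ht
    apply le_antisymm
    · refine csSup_le (Set.insert_nonempty _ _) ?_
      rintro z (rfl | ⟨s, ⟨hs, hst⟩, rfl⟩)
      · exact (abs_le.1 (aux_ratio_abs_le (f' t))).1
      · exact hφgood hs ht hst
    · exact le_csSup (hφm_bdd t) (Set.mem_insert_of_mem _ ⟨t, ⟨ht, le_refl t⟩, rfl⟩)
  set G := hφm_mono.stieltjesFunction with hGdef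
  have hG_eq_ct : ∀ t : ℝ, ContinuousAt φm t → G t = φm t := by
    intro t ht
    exact rightLim_eq_of_tendsto
      (ht.tendsto.mono_left nhdsWithin_le_nhds)
  have hGφ : ∀ᵐ t ∂ν, G t = φ t := by
    have hcnt : ∀ᵐ t ∂(volume : Measure ℝ), ContinuousAt φm t := by
      have h0 : ∀ᵐ t ∂(volume : Measure ℝ), t ∉ {x | ¬ContinuousAt φm x} :=
        measure_eq_zero_iff_ae_notMem.1 (hφm_mono.countable_not_continuousAt.measure_zero _)
      filter_upwards [h0] with t ht
      exact not_not.1 ht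
    filter_upwards [hgood, ae_restrict_of_ae hcnt] with t ⟨ht, hf, _⟩ hct
    rw [hG_eq_ct t hct, hφm_eq t ⟨hIcc ht, hf⟩]
  -- the Stieltjes measure
  set μr : Measure ℝ := G.measure.restrict (Set.Ioc a b) with hμr
  haveI hμr_fin : IsFiniteMeasure μr := by
    constructor
    rw [hμr, Measure.restrict_apply_univ, G.measure_Ioc]
    exact ENNReal.ofReal_lt_top
  have hG_mono : Monotone (G : ℝ → ℝ) := G.mono
  have hGt : ∀ t ∈ Set.Ioc a b, (μr (Set.Iic t)).toReal = G t - G a := by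
    intro t ht
    rw [hμr, Measure.restrict_apply measurableSet_Iic]
    have h2 : Set.Iic t ∩ Set.Ioc a b = Set.Ioc a t := by
      ext x
      simp only [Set.mem_inter_iff, Set.mem_Iic, Set.mem_Ioc]
      constructor
      · rintro ⟨h1, h2, h3⟩; exact ⟨h2, h1⟩
      · rintro ⟨h1, h2⟩; exact ⟨h2, h1, h2.trans ht.2⟩
    rw [h2, G.measure_Ioc, ENNReal.toReal_ofReal (sub_nonneg.2 (hG_mono ht.1.le))]
  -- the kernel H and Fubini
  set H : ℝ → ℝ → ℝ := fun t s => if s ≤ t then F' t else 0 with hH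
  have hHmeas : AEStronglyMeasurable (uncurry H) (ν.prod μr) := by
    have hD : Measurable (fun p : ℝ × ℝ => if p.2 ≤ p.1 then deriv g p.1 - deriv f p.1 else 0) :=
      Measurable.ite (measurableSet_le measurable_snd measurable_fst)
        (((measurable_deriv g).sub (measurable_deriv f)).comp measurable_fst) measurable_const
    refine hD.aestronglyMeasurable.congr ?_
    have hq := Measure.quasiMeasurePreserving_fst (μ := ν) (ν := μr) |>.ae_eq_comp hF'measD
    filter_upwards [hq] with p hp
    simp only [uncurry, hH, Function.comp] at hp ⊢
    split <;> simp [hp]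
  have hIic_int : ∀ t : ℝ, ∀ c : ℝ, Integrable (Set.indicator (Set.Iic t) (fun _ => c)) μr :=
    fun t c => (integrable_const c).indicator measurableSet_Iic
  have hHint : Integrable (uncurry H) (ν.prod μr) := by
    rw [integrable_prod_iff hHmeas]
    constructor
    · refine ae_of_all _ fun t => ?_
      have h1 : (fun s => uncurry H (t, s)) = Set.indicator (Set.Iic t) (fun _ => F' t) := by
        funext s
        simp [hH, uncurry, Set.indicator_apply, Set.mem_Iic]
      rw [h1]
      exact hIic_int t (F' t)
    · have heq : ∀ t : ℝ, (∫ s, ‖uncurry H (t, s)‖ ∂μr) = (μr (Set.Iic t)).toReal * ‖F' t‖ := by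
        intro t
        have h1 : (fun s => ‖uncurry H (t, s)‖) = Set.indicator (Set.Iic t) (fun _ => ‖F' t‖) := by
          funext s
          simp [hH, uncurry, Set.indicator_apply, Set.mem_Iic, apply_ite norm]
        rw [h1, integral_indicator measurableSet_Iic, setIntegral_const, smul_eq_mul, measureReal_def]
      simp only [heq]
      have hmon : Monotone (fun t : ℝ => (μr (Set.Iic t)).toReal) := by
        intro x y hxy
        exact ENNReal.toReal_mono (measure_ne_top μr _)
          (measure_mono (Set.Iic_subset_Iic.2 hxy))
      refine Integrable.mono ((hF'int.norm).const_mul (μr Set.univ).toReal)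
        (hmon.measurable.aestronglyMeasurable.mul hF'meas.norm) (ae_of_all _ fun t => ?_)
      have h2 : (μr (Set.Iic t)).toReal ≤ (μr Set.univ).toReal :=
        ENNReal.toReal_mono (measure_ne_top μr _) (measure_mono (Set.subset_univ _))
      simp only [Real.norm_eq_abs, abs_mul, abs_abs]
      refine mul_le_mul_of_nonneg_right ?_ (abs_nonneg _)
      rw [abs_of_nonneg ENNReal.toReal_nonneg, abs_of_nonneg ENNReal.toReal_nonneg]
      exact h2
  have hswap := integral_integral_swap hHint
  have hLHS : (∫ t, ∫ s, H t s ∂μr ∂ν) = ∫ t, (μr (Set.Iic t)).toReal * F' t ∂ν := by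
    refine integral_congr_ae (ae_of_all _ fun t => ?_)
    show (∫ s, H t s ∂μr) = (μr (Set.Iic t)).toReal * F' t
    have h1 : (fun s => H t s) = Set.indicator (Set.Iic t) (fun _ => F' t) := by
      funext s
      simp [hH, Set.indicator_apply, Set.mem_Iic]
    rw [h1, integral_indicator measurableSet_Iic, setIntegral_const, smul_eq_mul, measureReal_def]
  have hRHS : (∫ s, ∫ t, H t s ∂ν ∂μr) = ∫ s, (f s - g s) ∂μr := by
    refine integral_congr_ae ?_
    filter_upwards [ae_restrict_mem measurableSet_Ioc] with s hs
    show (∫ t, H t s ∂ν) = f s - g s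
    have h1 : (fun t => H t s) = Set.indicator (Set.Ici s) F' := by
      funext t
      simp [hH, Set.indicator_apply, Set.mem_Ici]
    rw [h1, hν, integral_indicator measurableSet_Ici,
      Measure.restrict_restrict measurableSet_Ici]
    have h2 : Set.Ici s ∩ Set.Ioc a b = Set.Icc s b := by
      ext x
      simp only [Set.mem_inter_iff, Set.mem_Ici, Set.mem_Icc, Set.mem_Ioc]
      constructor
      · rintro ⟨h1, _, h3⟩; exact ⟨h1, h3⟩
      · rintro ⟨h1, h2⟩; exact ⟨h1, hs.1.trans_le h1, h2⟩
    rw [h2]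
    have h3 : ∫ t in Set.Icc s b, F' t = ∫ t in Set.Ioc s b, F' t :=
      (setIntegral_congr_set Ioc_ae_eq_Icc).symm
    rw [h3, hFTC s (hIcc hs)]
    have h4 : g b - f b = 0 := by rw [hgb]; ring
    rw [h4]
    ring
  -- integrability of the pieces
  have hμIic_int : Integrable (fun t => (μr (Set.Iic t)).toReal * F' t) ν := by
    have hmon : Monotone (fun t : ℝ => (μr (Set.Iic t)).toReal) := by
      intro x y hxy
      exact ENNReal.toReal_mono (measure_ne_top μr _)
        (measure_mono (Set.Iic_subset_Iic.2 hxy))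
    refine Integrable.mono ((hF'int.norm).const_mul (μr Set.univ).toReal)
      (hmon.measurable.aestronglyMeasurable.mul hF'meas) (ae_of_all _ fun t => ?_)
    have h2 : (μr (Set.Iic t)).toReal ≤ (μr Set.univ).toReal :=
      ENNReal.toReal_mono (measure_ne_top μr _) (measure_mono (Set.subset_univ _))
    simp only [Real.norm_eq_abs, abs_mul, abs_abs]
    refine mul_le_mul_of_nonneg_right ?_ (abs_nonneg _)
    rw [abs_of_nonneg ENNReal.toReal_nonneg, abs_of_nonneg ENNReal.toReal_nonneg]
    exact h2
  have hφcont : Continuous (fun u : ℝ => u / Real.sqrt (1 + u ^ 2)) := by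
    refine Continuous.div continuous_id ?_ (fun u => ne_of_gt (aux_sqrt_pos u))
    exact Real.continuous_sqrt.comp (continuous_const.add (continuous_pow 2))
  have hφmeas : AEStronglyMeasurable φ ν := by
    have : φ = (fun u : ℝ => u / Real.sqrt (1 + u ^ 2)) ∘ f' := rfl
    rw [this]
    exact hφcont.comp_aestronglyMeasurable hf'meas
  have hφint : Integrable (fun t => φ t * F' t) ν := by
    refine Integrable.mono hF'int (hφmeas.mul hF'meas) (ae_of_all _ fun t => ?_)
    rw [Real.norm_eq_abs, Real.norm_eq_abs, abs_mul]
    calc |φ t| * |F' t| ≤ 1 * |F' t| :=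
          mul_le_mul_of_nonneg_right (aux_ratio_abs_le (f' t)) (abs_nonneg _)
      _ = |F' t| := one_mul _
  -- the key nonnegativity
  have hint0 : ∫ t, F' t ∂ν = 0 := by
    have h1 := hFTC a ⟨le_refl a, hable⟩
    have h4 : g b - f b = 0 := by rw [hgb]; ring
    have h5 : g a - f a = 0 := by rw [hga]; ring
    rw [h4, h5] at h1
    simpa using h1
  have hKey : 0 ≤ ∫ t, φ t * F' t ∂ν := by
    have h1 : ∫ t, φ t * F' t ∂ν = ∫ t, G t * F' t ∂ν := by
      refine integral_congr_ae ?_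
      filter_upwards [hGφ] with t h
      rw [h]
    have h2 : ∫ t, G t * F' t ∂ν
        = ∫ t, (G a * F' t + (μr (Set.Iic t)).toReal * F' t) ∂ν := by
      refine integral_congr_ae ?_
      filter_upwards [ae_restrict_mem measurableSet_Ioc] with t ht
      rw [hGt t ht]
      ring
    rw [h1, h2, integral_add (hF'int.const_mul _) hμIic_int, integral_const_mul, hint0,
      mul_zero, zero_add, ← hLHS, hswap, hRHS]
    refine integral_nonneg_of_ae ?_
    filter_upwards [ae_restrict_mem measurableSet_Ioc] with s hs
    show 0 ≤ f s - g s
    rcases eq_or_lt_of_le hs.2 with rfl | hlt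
    · simp [hgb]
    · have := hle s ⟨hs.1, hlt⟩
      linarith
  -- the main comparison
  rw [intervalIntegral.integral_of_le hable, intervalIntegral.integral_of_le hable]
  by_contra hcon
  push_neg at hcon
  set D : ℝ → ℝ := fun t =>
    Real.sqrt (1 + g' t ^ 2) - Real.sqrt (1 + f' t ^ 2) - φ t * F' t with hDdef
  have hDnonneg : ∀ t, 0 ≤ D t := by
    intro t
    have := aux_tangent (f' t) (g' t)
    simp only [hDdef, hφdef, hF']
    linarith
  have hDint : Integrable D ν := (hgIntOn.sub hfIntOn).sub hφint
  have hDsum : ∫ t, D t ∂ν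
      = (∫ t, Real.sqrt (1 + g' t ^ 2) ∂ν) - (∫ t, Real.sqrt (1 + f' t ^ 2) ∂ν)
        - ∫ t, φ t * F' t ∂ν := by
    simp only [hDdef]
    have e1 : Integrable (fun t => Real.sqrt (1 + g' t ^ 2) - Real.sqrt (1 + f' t ^ 2)) ν :=
      hgIntOn.sub hfIntOn
    rw [integral_sub e1 hφint, integral_sub hgIntOn hfIntOn]
  have hD0 : ∫ t, D t ∂ν = 0 := by
    have h1 : 0 ≤ ∫ t, D t ∂ν := integral_nonneg fun t => hDnonneg t
    have h2 : (∫ t, Real.sqrt (1 + g' t ^ 2) ∂ν) ≤ ∫ t, Real.sqrt (1 + f' t ^ 2) ∂ν := hcon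
    linarith [hDsum, hKey, h2, h1]
  have hDae : ∀ᵐ t ∂ν, D t = 0 := by
    have := (integral_eq_zero_iff_of_nonneg (fun t => hDnonneg t) hDint).1 hD0
    filter_upwards [this] with t ht
    exact ht
  have hF'0 : ∀ᵐ t ∂ν, F' t = 0 := by
    filter_upwards [hDae] with t ht
    by_contra hne'
    have hxy : f' t ≠ g' t := by
      intro h
      exact hne' (by simp [hF', h])
    have := aux_tangent_lt (f' t) (g' t) hxy
    simp only [hDdef, hφdef, hF'] at ht
    nlinarith [ht, this]
  have hzero : ∀ s ∈ Set.Icc a b, g s = f s := by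
    intro s hs
    have hsub : Set.Ioc s b ⊆ Set.Ioc a b := Set.Ioc_subset_Ioc_left hs.1
    have h0' : ∀ᵐ t ∂(volume.restrict (Set.Ioc s b)), F' t = 0 :=
      ae_restrict_of_ae_restrict_of_subset hsub hF'0
    have h0 : ∫ t in Set.Ioc s b, F' t = 0 := by
      rw [integral_congr_ae h0']
      simp
    have h1 := hFTC s hs
    rw [h0] at h1
    have hb0 : g b - f b = 0 := by rw [hgb]; ring
    linarith [h1]
  obtain ⟨t0, ht0, hneq⟩ := hne
  exact hneq (hzero t0 ht0)
end

section
/- Let B₁ and B₂ be continuous, piecewise continuously differentiable, monotonically increasing functions on [a,b] with B₁(a) = B₂(a), B₁(b) = B₂(b), and B₁(t) > B₂(t) for all t ∈ (a,b). If B₁ is convex on [a,b], then ∫ₐᵇ r⁻¹(B₁′(t)) dt < ∫ₐᵇ r⁻¹(B₂′(t)) dt; that is, the convex curve B₁ uses strictly less energy than B₂ to transmit the same amount of data. -/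
open MeasureTheory
open scoped ENNReal NNReal

/-- A rate function `r : [0,∞) → [0,∞)`: continuous, differentiable, strictly
increasing, strictly concave, `r 0 = 0` and `r p → ∞` as `p → ∞`. -/
structure RateFn (r : ℝ → ℝ) : Prop where
  cont : Continuous r
  diff : Differentiable ℝ r
  mono : StrictMonoOn r (Set.Ici 0)
  concave : StrictConcaveOn ℝ (Set.Ici 0) r
  zero : r 0 = 0
  nonneg : ∀ p : ℝ, 0 ≤ p → 0 ≤ r p
  tendsTop : Filter.Tendsto r Filter.atTop Filter.atTop



private lemma ftc_base {B B' : ℝ → ℝ} {a b : ℝ} (hab : a ≤ b)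
    (hcont : ContinuousOn B (Set.Icc a b))
    (hint : IntervalIntegrable B' volume a b)
    (hd : ∀ t ∈ Set.Ioo a b, HasDerivAt B (B' t) t) :
    ∫ t in a..b, B' t = B b - B a :=
  intervalIntegral.integral_eq_sub_of_hasDeriv_right_of_le hab hcont
    (fun t ht => (hd t ht).hasDerivWithinAt) hint

private lemma ftc_finset {B B' : ℝ → ℝ} :
    ∀ (n : ℕ) (F : Finset ℝ), F.card = n → ∀ a b : ℝ, a ≤ b →
    ContinuousOn B (Set.Icc a b) → IntervalIntegrable B' volume a b →
    (∀ t ∈ Set.Ioo a b, t ∉ F → HasDerivAt B (B' t) t) →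
    ∫ t in a..b, B' t = B b - B a := by
  intro n
  induction n with
  | zero =>
    intro F hF a b hab hcont hint hd
    refine ftc_base hab hcont hint (fun t ht => hd t ht ?_)
    have : F = ∅ := Finset.card_eq_zero.mp hF
    simp [this]
  | succ n ih =>
    intro F hF a b hab hcont hint hd
    by_cases hx : ∃ x ∈ F, x ∈ Set.Ioo a b
    · obtain ⟨x, hxF, hxI⟩ := hx
      have hax : a ≤ x := hxI.1.le
      have hxb : x ≤ b := hxI.2.le
      have hsub1 : Set.uIcc a x ⊆ Set.uIcc a b := by
        rw [Set.uIcc_of_le hax, Set.uIcc_of_le hab]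
        exact Set.Icc_subset_Icc le_rfl hxb
      have hsub2 : Set.uIcc x b ⊆ Set.uIcc a b := by
        rw [Set.uIcc_of_le hxb, Set.uIcc_of_le hab]
        exact Set.Icc_subset_Icc hax le_rfl
      have hcard : (F.erase x).card = n := by
        rw [Finset.card_erase_of_mem hxF, hF]; rfl
      have h1 : ∫ t in a..x, B' t = B x - B a := by
        refine ih (F.erase x) hcard a x hax
          (hcont.mono (Set.Icc_subset_Icc le_rfl hxb)) (hint.mono_set hsub1) ?_
        intro t ht htF
        refine hd t ⟨ht.1, ht.2.trans_le hxb⟩ (fun htF' => htF ?_)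
        exact Finset.mem_erase.mpr ⟨ht.2.ne, htF'⟩
      have h2 : ∫ t in x..b, B' t = B b - B x := by
        refine ih (F.erase x) hcard x b hxb
          (hcont.mono (Set.Icc_subset_Icc hax le_rfl)) (hint.mono_set hsub2) ?_
        intro t ht htF
        refine hd t ⟨hax.trans_lt ht.1, ht.2⟩ (fun htF' => htF ?_)
        exact Finset.mem_erase.mpr ⟨ht.1.ne', htF'⟩
      have := intervalIntegral.integral_add_adjacent_intervals
        (hint.mono_set hsub1) (hint.mono_set hsub2)
      rw [← this, h1, h2]; ring
    · push_neg at hx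
      exact ftc_base hab hcont hint (fun t ht => hd t ht (fun h => hx t h ht))



section psi
variable {rinv : ℝ → ℝ}

private noncomputable def psi (rinv : ℝ → ℝ) (x : ℝ) : ℝ :=
  sSup ((fun u => (rinv x - rinv u) / (x - u)) '' Set.Ico 0 x)

private lemma slope_flip (f : ℝ → ℝ) (p q : ℝ) :
    (f q - f p) / (q - p) = (f p - f q) / (p - q) := by
  rw [← neg_sub (f p), ← neg_sub p, neg_div_neg_eq]

variable (hsc : StrictConvexOn ℝ (Set.Ici 0) rinv)
include hsc

omit hsc in
private lemma psi_nonempty {x : ℝ} (hx : 0 < x) :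
    ((fun u => (rinv x - rinv u) / (x - u)) '' Set.Ico 0 x).Nonempty :=
  ⟨_, ⟨0, ⟨le_rfl, hx⟩, rfl⟩⟩

private lemma psi_bdd {x : ℝ} (hx : 0 < x) :
    BddAbove ((fun u => (rinv x - rinv u) / (x - u)) '' Set.Ico 0 x) := by
  refine ⟨(rinv (x + 1) - rinv x) / (x + 1 - x), ?_⟩
  rintro z ⟨u, hu, rfl⟩
  exact hsc.convexOn.slope_mono_adjacent hu.1 (le_trans hx.le (by linarith)) hu.2 (by linarith)

private lemma psi_le_slope {x : ℝ} (hx : 0 < x) {z : ℝ} (hxz : x < z) :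
    psi rinv x ≤ (rinv z - rinv x) / (z - x) := by
  refine csSup_le (psi_nonempty hx) ?_
  rintro w ⟨u, hu, rfl⟩
  dsimp only
  rw [slope_flip rinv u x]
  exact hsc.convexOn.secant_mono (le_of_lt hx) hu.1 (le_trans hx.le hxz.le)
    hu.2.ne (ne_of_gt hxz) (hu.2.le.trans hxz.le)

private lemma slope_le_psi {x : ℝ} (hx : 0 < x) {u : ℝ} (hu0 : 0 ≤ u) (hux : u < x) :
    (rinv x - rinv u) / (x - u) ≤ psi rinv x :=
  le_csSup (psi_bdd hsc hx) ⟨u, ⟨hu0, hux⟩, rfl⟩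

private lemma psi_subgrad_lt {x y : ℝ} (hx : 0 < x) (hy : 0 ≤ y) (hxy : y ≠ x) :
    rinv x + psi rinv x * (y - x) < rinv y := by
  rcases lt_or_gt_of_ne hxy with h | h
  · -- y < x
    set y' := (y + x) / 2 with hy'
    have hy'0 : 0 ≤ y' := by positivity
    have hyy' : y < y' := by simp only [hy']; linarith
    have hy'x : y' < x := by simp only [hy']; linarith
    have h1 : (rinv x - rinv y') / (x - y') ≤ psi rinv x := slope_le_psi hsc hx hy'0 hy'x
    have h2 : (rinv y - rinv x) / (y - x) < (rinv y' - rinv x) / (y' - x) :=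
      hsc.secant_strict_mono (le_of_lt hx) hy hy'0 hxy (ne_of_lt hy'x) hyy'
    rw [slope_flip rinv y' x] at h1
    have h3 : (rinv y - rinv x) / (y - x) < psi rinv x := lt_of_lt_of_le h2 h1
    have h4 : psi rinv x * (y - x) < rinv y - rinv x := by
      have := (div_lt_iff_of_neg (by linarith : y - x < 0)).mp h3
      linarith
    linarith
  · -- x < y
    set y' := (x + y) / 2 with hy'
    have hy'0 : 0 ≤ y' := by positivity
    have hxy' : x < y' := by simp only [hy']; linarith
    have hy'y : y' < y := by simp only [hy']; linarith
    have h1 : psi rinv x ≤ (rinv y' - rinv x) / (y' - x) := psi_le_slope hsc hx hxy'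
    have h2 : (rinv y' - rinv x) / (y' - x) < (rinv y - rinv x) / (y - x) :=
      hsc.secant_strict_mono (le_of_lt hx) hy'0 hy (ne_of_gt hxy') (ne_of_gt h) hy'y
    have h3 : psi rinv x < (rinv y - rinv x) / (y - x) := lt_of_le_of_lt h1 h2
    have h4 : psi rinv x * (y - x) < rinv y - rinv x :=
      (lt_div_iff₀ (by linarith : (0:ℝ) < y - x)).mp h3
    linarith

private lemma psi_subgrad_le {x y : ℝ} (hx : 0 < x) (hy : 0 ≤ y) :
    rinv x + psi rinv x * (y - x) ≤ rinv y := by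
  rcases eq_or_ne y x with rfl | h
  · simp
  · exact (psi_subgrad_lt hsc hx hy h).le

private lemma psi_mono {x z : ℝ} (hx : 0 < x) (hxz : x ≤ z) :
    psi rinv x ≤ psi rinv z := by
  rcases eq_or_lt_of_le hxz with rfl | hlt
  · exact le_rfl
  refine csSup_le (psi_nonempty hx) ?_
  rintro w ⟨u, hu, rfl⟩
  dsimp only
  calc (rinv x - rinv u) / (x - u)
      ≤ (rinv z - rinv x) / (z - x) :=
        hsc.convexOn.slope_mono_adjacent hu.1 (hx.le.trans hxz) hu.2 hlt
    _ ≤ psi rinv z := slope_le_psi hsc (hx.trans hlt) hx.le hlt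

private lemma psi_pos (hmono : ∀ ⦃y z : ℝ⦄, 0 ≤ y → y < z → rinv y < rinv z)
    {x : ℝ} (hx : 0 < x) : 0 < psi rinv x := by
  have h1 : (rinv x - rinv 0) / (x - 0) ≤ psi rinv x := slope_le_psi hsc hx le_rfl hx
  have h2 : 0 < (rinv x - rinv 0) / (x - 0) :=
    div_pos (by linarith [hmono le_rfl hx]) (by linarith)
  linarith

end psi

/-- among two continuous, piecewise continuously differentiable,
monotonically increasing data curves on `[a,b]` with the same endpoints, with
`B₁ > B₂` on the interior, if `B₁` is convex then `B₁` uses strictly less energy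
(`∫ r⁻¹(B′)`) than `B₂`. -/
theorem convex_data_curve_uses_less_energy
    (r rinv : ℝ → ℝ) (hr : RateFn r)
    (hrinv_left : ∀ x : ℝ, 0 ≤ x → rinv (r x) = x)
    (hrinv_right : ∀ y : ℝ, 0 ≤ y → r (rinv y) = y)
    (a b : ℝ) (hab : a < b) (B₁ B₂ B₁' B₂' : ℝ → ℝ)
    (hB₁c : ContinuousOn B₁ (Set.Icc a b)) (hB₂c : ContinuousOn B₂ (Set.Icc a b))
    (F₁ F₂ : Finset ℝ)
    (hB₁d : ∀ t ∈ Set.Icc a b, t ∉ F₁ → HasDerivAt B₁ (B₁' t) t)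
    (hB₂d : ∀ t ∈ Set.Icc a b, t ∉ F₂ → HasDerivAt B₂ (B₂' t) t)
    (hB₁'c : ∀ t ∈ Set.Icc a b, t ∉ F₁ → ContinuousAt B₁' t)
    (hB₂'c : ∀ t ∈ Set.Icc a b, t ∉ F₂ → ContinuousAt B₂' t)
    (hB₁mono : MonotoneOn B₁ (Set.Icc a b)) (hB₂mono : MonotoneOn B₂ (Set.Icc a b))
    (hB₁int : IntervalIntegrable (fun t => rinv (B₁' t)) volume a b)
    (hB₂int : IntervalIntegrable (fun t => rinv (B₂' t)) volume a b)
    (heqa : B₁ a = B₂ a) (heqb : B₁ b = B₂ b)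
    (hgt : ∀ t ∈ Set.Ioo a b, B₂ t < B₁ t)
    (hconv : ConvexOn ℝ (Set.Icc a b) B₁) :
    (∫ t in a..b, rinv (B₁' t)) < ∫ t in a..b, rinv (B₂' t) := by
  classical
  -- ### rinv basics
  have hri0 : rinv 0 = 0 := by simpa [hr.zero] using hrinv_left 0 le_rfl
  have hsurj : ∀ y : ℝ, 0 ≤ y → ∃ x, 0 ≤ x ∧ r x = y := by
    intro y hy
    obtain ⟨x, hyx, hx0⟩ := ((hr.tendsTop.eventually_ge_atTop y).and
      (Filter.eventually_ge_atTop (0:ℝ))).exists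
    have h1 : y ∈ Set.Icc (r 0) (r x) := ⟨by rw [hr.zero]; exact hy, hyx⟩
    obtain ⟨x', hx', hrx'⟩ := intermediate_value_Icc hx0 (hr.cont.continuousOn) h1
    exact ⟨x', hx'.1, hrx'⟩
  have hrinn : ∀ y : ℝ, 0 ≤ y → 0 ≤ rinv y := by
    intro y hy
    obtain ⟨x, hx0, rfl⟩ := hsurj y hy
    rw [hrinv_left x hx0]; exact hx0
  have hrmonoOn : MonotoneOn r (Set.Ici 0) := hr.mono.monotoneOn
  have hrimono : ∀ ⦃y z : ℝ⦄, 0 ≤ y → y < z → rinv y < rinv z := by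
    intro y z hy hyz
    by_contra hcon
    push_neg at hcon
    have h1 : r (rinv z) ≤ r (rinv y) :=
      hrmonoOn (hrinn z (by linarith)) (hrinn y hy) hcon
    rw [hrinv_right y hy, hrinv_right z (by linarith)] at h1
    linarith
  have hsc : StrictConvexOn ℝ (Set.Ici 0) rinv := by
    refine ⟨convex_Ici 0, ?_⟩
    intro x hx y hy hxy α β hα hβ hαβ
    simp only [smul_eq_mul] at *
    have hx' : (0:ℝ) ≤ x := hx
    have hy' : (0:ℝ) ≤ y := hy
    have hu := hrinn x hx'
    have hv := hrinn y hy'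
    have huv : rinv x ≠ rinv y := fun h =>
      hxy (by rw [← hrinv_right x hx', ← hrinv_right y hy', h])
    have hkey := hr.concave.2 hu hv huv hα hβ hαβ
    simp only [smul_eq_mul] at hkey
    rw [hrinv_right x hx', hrinv_right y hy'] at hkey
    by_contra hcon
    push_neg at hcon
    have hcomb0 : (0:ℝ) ≤ α * x + β * y := by positivity
    have hcomb0' : (0:ℝ) ≤ α * rinv x + β * rinv y := by positivity
    have h2 : r (α * rinv x + β * rinv y) ≤ r (rinv (α * x + β * y)) :=
      hrmonoOn hcomb0' (hrinn _ hcomb0) hcon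
    rw [hrinv_right _ hcomb0] at h2
    linarith
  -- ### the good set
  set good : Set ℝ := Set.Ioo a b \ (↑F₁ ∪ ↑F₂) with hgood_def
  have hgood_sub : good ⊆ Set.Ioo a b := Set.diff_subset
  have hgood_open : IsOpen good := by
    have hcl : IsClosed (↑F₁ ∪ ↑F₂ : Set ℝ) :=
      ((F₁.finite_toSet).union (F₂.finite_toSet)).isClosed
    exact isOpen_Ioo.sdiff hcl
  have hgood_meas : MeasurableSet good := hgood_open.measurableSet
  have hgoodF₁ : ∀ t ∈ good, t ∉ F₁ := fun t ht h => ht.2 (Or.inl h)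
  have hgoodF₂ : ∀ t ∈ good, t ∉ F₂ := fun t ht h => ht.2 (Or.inr h)
  have hIccmem : ∀ t ∈ Set.Ioo a b, t ∈ Set.Icc a b := fun t ht => Set.Ioo_subset_Icc_self ht
  -- ### derivative vs slope facts
  have hslope_deriv₁ : ∀ t ∈ Set.Ioo a b, t ∉ F₁ →
      (∀ s ∈ Set.Icc a b, s < t → (B₁ t - B₁ s) / (t - s) ≤ B₁' t) ∧
      (∀ u ∈ Set.Icc a b, t < u → B₁' t ≤ (B₁ u - B₁ t) / (u - t)) := by
    intro t ht htF
    have hd := hB₁d t (hIccmem t ht) htF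
    have htends := hasDerivAt_iff_tendsto_slope.mp hd
    constructor
    · intro s hs hst
      have htl : Filter.Tendsto (slope B₁ t) (nhdsWithin t (Set.Iio t)) (nhds (B₁' t)) :=
        htends.mono_left (nhdsWithin_mono t (fun z hz => ne_of_lt hz))
      have hev : ∀ᶠ z in nhdsWithin t (Set.Iio t), (B₁ s - B₁ t) / (s - t) ≤ slope B₁ t z := by
        filter_upwards [Ioo_mem_nhdsLT_of_mem ⟨hst, le_rfl⟩] with z hz
        rw [slope_def_field]
        exact hconv.secant_mono (hIccmem t ht) hs
          ⟨hs.1.trans hz.1.le, hz.2.le.trans (hIccmem t ht).2⟩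
          (ne_of_lt hst) (ne_of_lt hz.2) hz.1.le
      have := ge_of_tendsto htl hev
      rw [slope_flip B₁ s t]
      exact this
    · intro u hu htu
      have htl : Filter.Tendsto (slope B₁ t) (nhdsWithin t (Set.Ioi t)) (nhds (B₁' t)) :=
        htends.mono_left (nhdsWithin_mono t (fun z hz => ne_of_gt hz))
      have hev : ∀ᶠ z in nhdsWithin t (Set.Ioi t), slope B₁ t z ≤ (B₁ u - B₁ t) / (u - t) := by
        filter_upwards [Ioo_mem_nhdsGT_of_mem ⟨le_rfl, htu⟩] with z hz
        rw [slope_def_field]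
        exact hconv.secant_mono (hIccmem t ht) 
          ⟨(hIccmem t ht).1.trans hz.1.le, hz.2.le.trans hu.2⟩ hu
          (ne_of_gt hz.1) (ne_of_gt htu) hz.2.le
      exact le_of_tendsto htl hev
  have hB2'nn : ∀ t ∈ good, 0 ≤ B₂' t := by
    intro t ht
    have htI := hgood_sub ht
    have hd := hB₂d t (hIccmem t htI) (hgoodF₂ t ht)
    have htends := hasDerivAt_iff_tendsto_slope.mp hd
    have htl : Filter.Tendsto (slope B₂ t) (nhdsWithin t (Set.Ioi t)) (nhds (B₂' t)) :=
      htends.mono_left (nhdsWithin_mono t (fun z hz => ne_of_gt hz))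
    refine ge_of_tendsto htl ?_
    filter_upwards [Ioo_mem_nhdsGT_of_mem ⟨le_rfl, htI.2⟩] with z hz
    rw [slope_def_field]
    apply div_nonneg _ (by linarith [hz.1] : (0:ℝ) ≤ z - t)
    have := hB₂mono (hIccmem t htI) ⟨(hIccmem t htI).1.trans hz.1.le, hz.2.le⟩ hz.1.le
    linarith
  have hB1'pos : ∀ t ∈ good, 0 < B₁' t := by
    intro t ht
    have htI := hgood_sub ht
    have h1 := (hslope_deriv₁ t htI (hgoodF₁ t ht)).1 a
      (Set.left_mem_Icc.mpr hab.le) htI.1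
    have h2 : B₁ a < B₁ t := by
      have h3 : B₂ a ≤ B₂ t := hB₂mono (Set.left_mem_Icc.mpr hab.le) (hIccmem t htI) htI.1.le
      have h4 := hgt t htI
      linarith [heqa]
    have h5 : 0 < (B₁ t - B₁ a) / (t - a) := div_pos (by linarith) (by linarith [htI.1])
    linarith
  have hB1'mono : ∀ s ∈ good, ∀ t ∈ good, s ≤ t → B₁' s ≤ B₁' t := by
    intro s hs t ht hst
    rcases eq_or_lt_of_le hst with rfl | hlt
    · exact le_rfl
    have hsI := hgood_sub hs
    have htI := hgood_sub ht
    have h1 := (hslope_deriv₁ s hsI (hgoodF₁ s hs)).2 t (hIccmem t htI) hlt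
    have h2 := (hslope_deriv₁ t htI (hgoodF₁ t ht)).1 s (hIccmem s hsI) hlt
    calc B₁' s ≤ (B₁ t - B₁ s) / (t - s) := h1
      _ ≤ B₁' t := h2
  have hDle : ∀ t ∈ Set.Icc a b, B₂ t ≤ B₁ t := by
    intro t ht
    rcases eq_or_lt_of_le ht.1 with rfl | h1
    · exact le_of_eq heqa.symm
    rcases eq_or_lt_of_le ht.2 with rfl | h2
    · exact le_of_eq heqb.symm
    exact (hgt t ⟨h1, h2⟩).le
  -- ### measures
  set ν : Measure ℝ := volume.restrict good with hν_def
  have hgood_ae_Ioo : Set.Ioo a b =ᵐ[volume] good := by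
    refine MeasureTheory.ae_eq_set.mpr ⟨?_, ?_⟩
    · refine measure_mono_null (?_ : Set.Ioo a b \ good ⊆ ↑F₁ ∪ ↑F₂) ?_
      · intro t ht
        by_contra h
        exact ht.2 ⟨ht.1, h⟩
      · exact (Set.Finite.union F₁.finite_toSet F₂.finite_toSet).measure_zero volume
    · rw [Set.diff_eq_empty.mpr hgood_sub]
      simp
  have hνIoc : volume.restrict (Set.Ioc a b) = ν := by
    rw [hν_def]
    exact Measure.restrict_congr_set (Ioo_ae_eq_Ioc.symm.trans hgood_ae_Ioo)
  have hν_ae_good : ∀ᵐ t ∂ν, t ∈ good := ae_restrict_mem hgood_meas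
  have hνfin : IsFiniteMeasure ν := by
    constructor
    rw [hν_def, Measure.restrict_apply MeasurableSet.univ]
    simp only [Set.univ_inter]
    exact lt_of_le_of_lt (measure_mono hgood_sub) (by simp)
  have hIId : ∀ f : ℝ → ℝ, IntervalIntegrable f volume a b →
      Integrable f ν ∧ (∫ t in a..b, f t) = ∫ t, f t ∂ν := by
    intro f hf
    have h1 : IntegrableOn f (Set.Ioc a b) volume :=
      (intervalIntegrable_iff_integrableOn_Ioc_of_le hab.le).mp hf
    constructor
    · rw [← hνIoc]
      exact h1
    · rw [intervalIntegral.integral_of_le hab.le]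
      rw [show (∫ t in Set.Ioc a b, f t) = ∫ t, f t ∂(volume.restrict (Set.Ioc a b)) from rfl,
        hνIoc]
  have hInt1ν : Integrable (fun t => rinv (B₁' t)) ν := (hIId _ hB₁int).1
  have hInt2ν : Integrable (fun t => rinv (B₂' t)) ν := (hIId _ hB₂int).1
  have haeB1' : AEMeasurable B₁' ν := by
    have hc : ContinuousOn B₁' good := fun t ht =>
      (hB₁'c t (hIccmem t (hgood_sub ht)) (hgoodF₁ t ht)).continuousWithinAt
    exact hc.aemeasurable hgood_meas
  have haeB2' : AEMeasurable B₂' ν := by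
    have hc : ContinuousOn B₂' good := fun t ht =>
      (hB₂'c t (hIccmem t (hgood_sub ht)) (hgoodF₂ t ht)).continuousWithinAt
    exact hc.aemeasurable hgood_meas
  -- ### linear lower bound for rinv gives integrability of B₁' and B₂'
  have hκ : 0 < rinv 2 - rinv 1 := by
    have := hrimono (le_of_lt one_pos) (by norm_num : (1:ℝ) < 2)
    linarith
  have hbound : ∀ y : ℝ, 0 ≤ y → y ≤ 2 + rinv y / (rinv 2 - rinv 1) := by
    intro y hy
    rcases le_or_gt y 2 with h | h
    · have h1 := hrinn y hy
      have h2 : 0 ≤ rinv y / (rinv 2 - rinv 1) := div_nonneg h1 hκ.le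
      linarith
    · have hs := hsc.convexOn.slope_mono_adjacent (show (1:ℝ) ∈ Set.Ici 0 by norm_num)
        (show y ∈ Set.Ici 0 from hy) (by norm_num : (1:ℝ) < 2) h
      rw [show (2:ℝ) - 1 = 1 by norm_num, div_one] at hs
      have hy2 : (0:ℝ) < y - 2 := by linarith
      have h2 : (rinv 2 - rinv 1) * (y - 2) ≤ rinv y - rinv 2 := (le_div_iff₀ hy2).mp hs
      have h3 : 0 ≤ rinv 2 := hrinn 2 (by norm_num)
      have h4 : (y - 2) * (rinv 2 - rinv 1) ≤ rinv y := by nlinarith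
      have h5 : y - 2 ≤ rinv y / (rinv 2 - rinv 1) := (le_div_iff₀ hκ).mpr h4
      linarith
  have hB1'int : Integrable B₁' ν := by
    refine Integrable.mono' ((integrable_const 2).add (hInt1ν.div_const (rinv 2 - rinv 1)))
      haeB1'.aestronglyMeasurable ?_
    filter_upwards [hν_ae_good] with t ht
    rw [Real.norm_eq_abs, abs_of_nonneg (hB1'pos t ht).le]
    exact hbound _ (hB1'pos t ht).le
  have hB2'int : Integrable B₂' ν := by
    refine Integrable.mono' ((integrable_const 2).add (hInt2ν.div_const (rinv 2 - rinv 1)))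
      haeB2'.aestronglyMeasurable ?_
    filter_upwards [hν_ae_good] with t ht
    rw [Real.norm_eq_abs, abs_of_nonneg (hB2'nn t ht)]
    exact hbound _ (hB2'nn t ht)
  -- ### FTC on subintervals
  have hIocGood : ∀ c d : ℝ, a ≤ c → d ≤ b →
      volume.restrict (Set.Ioc c d) = ν.restrict (Set.Ioc c d) := by
    intro c d hc hd
    rw [hν_def, Measure.restrict_restrict measurableSet_Ioc]
    refine Measure.restrict_congr_set (MeasureTheory.ae_eq_set.mpr ⟨?_, ?_⟩)
    · refine measure_mono_null (?_ : _ ⊆ (↑F₁ ∪ ↑F₂ : Set ℝ) ∪ {b}) ?_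
      · rintro t ⟨ht, htg⟩
        by_cases htb : t = b
        · exact Or.inr (by simp [htb])
        · refine Or.inl ?_
          by_contra h
          exact htg ⟨ht, ⟨lt_of_le_of_lt hc ht.1, lt_of_le_of_ne (ht.2.trans hd) htb⟩, h⟩
      · refine measure_union_null
          ((Set.Finite.union F₁.finite_toSet F₂.finite_toSet).measure_zero volume) ?_
        simp
    · rw [Set.diff_eq_empty.mpr Set.inter_subset_left]
      simp
  have hIntSub : ∀ (f : ℝ → ℝ), Integrable f ν → ∀ c d : ℝ, a ≤ c → c ≤ d → d ≤ b →
      IntervalIntegrable f volume c d := by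
    intro f hf c d hc hcd hd
    rw [intervalIntegrable_iff_integrableOn_Ioc_of_le hcd]
    unfold IntegrableOn
    rw [hIocGood c d hc hd]
    exact hf.restrict
  have hFTC : ∀ (B B' : ℝ → ℝ) (F : Finset ℝ), ContinuousOn B (Set.Icc a b) →
      (∀ t ∈ Set.Icc a b, t ∉ F → HasDerivAt B (B' t) t) → Integrable B' ν →
      ∀ c ∈ Set.Icc a b, ∫ t in c..b, B' t = B b - B c := by
    intro B B' F hc hd hint c hcI
    exact ftc_finset F.card F rfl c b hcI.2
      (hc.mono (Set.Icc_subset_Icc hcI.1 le_rfl))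
      (hIntSub B' hint c b hcI.1 hcI.2 le_rfl)
      (fun t ht htF => hd t ⟨hcI.1.trans ht.1.le, ht.2.le⟩ htF)
  -- ### monotone measurable versions of rinv and psi
  have hrinvmonoOn : MonotoneOn rinv (Set.Ici 0) := by
    intro u hu v hv huv
    rcases eq_or_lt_of_le huv with rfl | h
    · exact le_rfl
    · exact (hrimono hu h).le
  set rinvE : ℝ → ℝ := fun y => rinv (max y 0) with hrinvE_def
  have hrinvE_mono : Monotone rinvE := fun u v huv =>
    hrinvmonoOn (le_max_right u 0) (le_max_right v 0) (max_le_max huv le_rfl)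
  have hrinvE_meas : Measurable rinvE := hrinvE_mono.measurable
  have hrinvE_eq : ∀ y : ℝ, 0 ≤ y → rinvE y = rinv y := by
    intro y hy
    rw [hrinvE_def]
    simp [max_eq_left hy]
  set Ψ : ℝ → ℝ := fun x => if 0 < x then psi rinv x else 0 with hΨ_def
  have hΨ_eq : ∀ x : ℝ, 0 < x → Ψ x = psi rinv x := fun x hx => if_pos hx
  have hΨ_mono : Monotone Ψ := by
    intro u v huv
    rcases eq_or_lt_of_le huv with rfl | h
    · exact le_rfl
    by_cases hu : 0 < u
    · rw [hΨ_eq u hu, hΨ_eq v (hu.trans h)]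
      exact psi_mono hsc hu huv
    · rw [hΨ_def]
      simp only [if_neg hu]
      by_cases hv : 0 < v
      · rw [if_pos hv]
        exact (psi_pos hsc hrimono hv).le
      · rw [if_neg hv]
  have hΨ_meas : Measurable Ψ := hΨ_mono.measurable
  have hΨ_nn : ∀ x : ℝ, 0 ≤ Ψ x := by
    intro x
    by_cases hx : 0 < x
    · rw [hΨ_eq x hx]; exact (psi_pos hsc hrimono hx).le
    · rw [hΨ_def]; simp [if_neg hx]
  -- ### the set where the derivatives differ has positive measure
  have hcB1'g : ContinuousOn B₁' good := fun t ht =>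
    (hB₁'c t (hIccmem t (hgood_sub ht)) (hgoodF₁ t ht)).continuousWithinAt
  have hcB2'g : ContinuousOn B₂' good := fun t ht =>
    (hB₂'c t (hIccmem t (hgood_sub ht)) (hgoodF₂ t ht)).continuousWithinAt
  set S : Set ℝ := good ∩ (fun t => B₁' t - B₂' t) ⁻¹' {(0:ℝ)}ᶜ with hS_def
  have hS_open : IsOpen S :=
    ContinuousOn.isOpen_inter_preimage (hcB1'g.sub hcB2'g) hgood_open isOpen_compl_singleton
  have hS_sub : S ⊆ good := Set.inter_subset_left
  have hS_spec : ∀ t ∈ S, B₁' t ≠ B₂' t := by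
    intro t ht h
    exact ht.2 (by simp [h])
  have hSpos : 0 < ν S := by
    rcases eq_or_lt_of_le (by simp : (0:ℝ≥0∞) ≤ ν S) with h | h
    swap
    · exact h
    exfalso
    have hSvol : volume S = 0 := by
      have h1 : ν S = volume (S ∩ good) := Measure.restrict_apply hS_open.measurableSet
      rw [Set.inter_eq_left.mpr hS_sub] at h1
      rw [← h1, ← h]
    set m := (a + b) / 2 with hm_def
    have hm : m ∈ Set.Ioo a b := ⟨by rw [hm_def]; linarith, by rw [hm_def]; linarith⟩
    have hnull : volume ((Set.Ioc m b \ good) ∪ S) = 0 := by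
      refine measure_union_null ?_ hSvol
      refine measure_mono_null (?_ : _ ⊆ (↑F₁ ∪ ↑F₂ : Set ℝ) ∪ {b}) ?_
      · rintro t ⟨ht, htg⟩
        by_cases htb : t = b
        · exact Or.inr (by simp [htb])
        · refine Or.inl ?_
          by_contra hF
          exact htg ⟨⟨hm.1.trans ht.1, lt_of_le_of_ne ht.2 htb⟩, hF⟩
      · exact measure_union_null
          ((Set.Finite.union F₁.finite_toSet F₂.finite_toSet).measure_zero volume) (by simp)
    have hae : ∀ᵐ x ∂volume, x ∈ Set.uIoc m b → B₁' x = B₂' x := by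
      filter_upwards [measure_eq_zero_iff_ae_notMem.mp hnull] with x hx hxI
      rw [Set.uIoc_of_le hm.2.le] at hxI
      by_cases hxg : x ∈ good
      · by_contra hne
        exact hx (Or.inr ⟨hxg, by simpa using sub_ne_zero_of_ne hne⟩)
      · exact absurd (Or.inl ⟨hxI, hxg⟩) hx
    have e0 : ∫ t in m..b, B₁' t = ∫ t in m..b, B₂' t := intervalIntegral.integral_congr_ae hae
    have e1 := hFTC B₁ B₁' F₁ hB₁c hB₁d hB1'int m (hIccmem m hm)
    have e2 := hFTC B₂ B₂' F₂ hB₂c hB₂d hB2'int m (hIccmem m hm)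
    have : B₂ m < B₁ m := hgt m hm
    rw [e1, e2] at e0
    rw [heqb] at e0
    linarith
  -- ### choose the threshold M₀
  obtain ⟨M₀, hM₀⟩ : ∃ n : ℕ, 0 < ν (S ∩ B₁' ⁻¹' Set.Iic (n : ℝ)) := by
    by_contra hcon
    push_neg at hcon
    have h0 : ∀ n : ℕ, ν (S ∩ B₁' ⁻¹' Set.Iic (n : ℝ)) = 0 := fun n =>
      le_antisymm (hcon n) zero_le
    have hcup : S ⊆ ⋃ n : ℕ, S ∩ B₁' ⁻¹' Set.Iic (n : ℝ) := by
      intro t ht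
      obtain ⟨n, hn⟩ := exists_nat_ge (B₁' t)
      exact Set.mem_iUnion.mpr ⟨n, ht, hn⟩
    have : ν S ≤ 0 := by
      refine le_trans (measure_mono hcup) (le_trans (measure_iUnion_le _) ?_)
      simp [h0]
    exact absurd (le_antisymm this zero_le) hSpos.ne'
  set S₀ : Set ℝ := S ∩ B₁' ⁻¹' Set.Iic (M₀ : ℝ) with hS₀_def
  have hS₀_meas : MeasurableSet S₀ := by
    have h1 : IsOpen (S ∩ B₁' ⁻¹' Set.Ioi (M₀ : ℝ)) :=
      ContinuousOn.isOpen_inter_preimage (hcB1'g.mono hS_sub) hS_open isOpen_Ioi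
    have h2 : S₀ = S \ (S ∩ B₁' ⁻¹' Set.Ioi (M₀ : ℝ)) := by
      rw [hS₀_def]
      ext t
      simp only [Set.mem_inter_iff, Set.mem_diff, Set.mem_preimage, Set.mem_Iic, Set.mem_Ioi]
      constructor
      · rintro ⟨h, h'⟩
        exact ⟨h, fun hc => absurd h' (not_le.mpr hc.2)⟩
      · rintro ⟨h, h'⟩
        refine ⟨h, le_of_not_gt (fun hc => h' ⟨h, hc⟩)⟩
    rw [h2]
    exact hS_open.measurableSet.diff h1.measurableSet
  -- ### the gap function
  set gp : ℝ → ℝ := fun t => rinvE (B₂' t) - rinvE (B₁' t) - Ψ (B₁' t) * (B₂' t - B₁' t)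
    with hgp_def
  have hgp_good : ∀ t ∈ good,
      gp t = rinv (B₂' t) - rinv (B₁' t) - psi rinv (B₁' t) * (B₂' t - B₁' t) := by
    intro t ht
    rw [hgp_def]
    simp only
    rw [hrinvE_eq _ (hB2'nn t ht), hrinvE_eq _ (hB1'pos t ht).le, hΨ_eq _ (hB1'pos t ht)]
  have hgp_pos : ∀ t ∈ S, 0 < gp t := by
    intro t ht
    rw [hgp_good t (hS_sub ht)]
    have h1 := psi_subgrad_lt hsc (hB1'pos t (hS_sub ht)) (hB2'nn t (hS_sub ht))
      (Ne.symm (hS_spec t ht))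
    linarith
  have hgp_aem : AEMeasurable gp ν := by
    refine AEMeasurable.sub (AEMeasurable.sub ?_ ?_) (AEMeasurable.mul ?_ (haeB2'.sub haeB1'))
    · exact hrinvE_meas.comp_aemeasurable haeB2'
    · exact hrinvE_meas.comp_aemeasurable haeB1'
    · exact hΨ_meas.comp_aemeasurable haeB1'
  set G : ℝ → ℝ := hgp_aem.mk gp with hG_def
  have hG_meas : Measurable G := hgp_aem.measurable_mk
  have hG_ae : gp =ᵐ[ν] G := hgp_aem.ae_eq_mk
  -- ### choose the strictness level ε₀
  have hS₀G : 0 < ν (S₀ ∩ G ⁻¹' Set.Ioi (0:ℝ)) := by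
    have hdn : ν (S₀ \ G ⁻¹' Set.Ioi (0:ℝ)) = 0 := by
      refine measure_mono_null (?_ : _ ⊆ {t | gp t ≠ G t}) ?_
      · rintro t ⟨ht, htG⟩
        intro hEq
        refine htG ?_
        simp only [Set.mem_preimage, Set.mem_Ioi]
        rw [← hEq]
        exact hgp_pos t ht.1
      · exact hG_ae
    calc 0 < ν S₀ := hM₀
      _ ≤ ν (S₀ ∩ G ⁻¹' Set.Ioi (0:ℝ)) + ν (S₀ \ G ⁻¹' Set.Ioi (0:ℝ)) := by
          refine le_trans (measure_mono ?_) (measure_union_le _ _)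
          intro t ht
          by_cases h : t ∈ G ⁻¹' Set.Ioi (0:ℝ)
          · exact Set.mem_union_left _ ⟨ht, h⟩
          · exact Set.mem_union_right _ ⟨ht, h⟩
      _ = ν (S₀ ∩ G ⁻¹' Set.Ioi (0:ℝ)) := by rw [hdn, add_zero]
  obtain ⟨k, hk⟩ : ∃ k : ℕ, 0 < ν (S₀ ∩ G ⁻¹' Set.Ioi (1 / ((k : ℝ) + 1))) := by
    by_contra hcon
    push_neg at hcon
    have h0 : ∀ n : ℕ, ν (S₀ ∩ G ⁻¹' Set.Ioi (1 / ((n : ℝ) + 1))) = 0 := fun n =>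
      le_antisymm (hcon n) zero_le
    have hcup : S₀ ∩ G ⁻¹' Set.Ioi (0:ℝ) ⊆
        ⋃ n : ℕ, S₀ ∩ G ⁻¹' Set.Ioi (1 / ((n : ℝ) + 1)) := by
      rintro t ⟨ht, htG⟩
      obtain ⟨n, hn⟩ := exists_nat_one_div_lt (K := ℝ) (Set.mem_Ioi.mp htG)
      exact Set.mem_iUnion.mpr ⟨n, ht, hn⟩
    have : ν (S₀ ∩ G ⁻¹' Set.Ioi (0:ℝ)) ≤ 0 := by
      refine le_trans (measure_mono hcup) (le_trans (measure_iUnion_le _) ?_)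
      have h0' := h0
      simp only [one_div] at h0'
      simp [h0']
    exact absurd (le_antisymm this zero_le) hS₀G.ne'
  set ε₀ : ℝ := 1 / ((k : ℝ) + 1) with hε₀_def
  have hε₀pos : 0 < ε₀ := by rw [hε₀_def]; positivity
  set T₀ : Set ℝ := S₀ ∩ G ⁻¹' Set.Ioi ε₀ with hT₀_def
  have hT₀_meas : MeasurableSet T₀ := hS₀_meas.inter (hG_meas measurableSet_Ioi)
  have hT₀pos : 0 < ν T₀ := hk
  have hT₀fin : ν T₀ ≠ ⊤ := (measure_lt_top ν T₀).ne
  have hT₀gap : ∀ᵐ t ∂ν, t ∈ T₀ → ε₀ < gp t := by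
    filter_upwards [hG_ae] with t hGt ht
    rw [hGt]
    exact ht.2
  have hT₀S₀ : T₀ ⊆ S₀ := Set.inter_subset_left
  -- ### auxiliary a.e.-measurability and FTC values
  have haeR : ∀ m : ℕ, AEMeasurable (fun t => ENNReal.ofReal (rinv (min (B₁' t) m))) ν := by
    intro m
    refine ENNReal.measurable_ofReal.comp_aemeasurable ?_
    have h1 : AEMeasurable (fun t => rinvE (min (B₁' t) (m:ℝ))) ν :=
      hrinvE_meas.comp_aemeasurable (haeB1'.min aemeasurable_const)
    refine h1.congr ?_
    filter_upwards [hν_ae_good] with t ht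
    exact hrinvE_eq _ (le_min (hB1'pos t ht).le (Nat.cast_nonneg m))
  have hB1ab : ∫ t, B₁' t ∂ν = B₁ b - B₁ a := by
    rw [← (hIId _ (hIntSub B₁' hB1'int a b le_rfl hab.le le_rfl)).2]
    exact hFTC B₁ B₁' F₁ hB₁c hB₁d hB1'int a (Set.left_mem_Icc.mpr hab.le)
  have hB2ab : ∫ t, B₂' t ∂ν = B₂ b - B₂ a := by
    rw [← (hIId _ (hIntSub B₂' hB2'int a b le_rfl hab.le le_rfl)).2]
    exact hFTC B₂ B₂' F₂ hB₂c hB₂d hB2'int a (Set.left_mem_Icc.mpr hab.le)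
  have hL1'eq : (∫⁻ t, ENNReal.ofReal (B₁' t) ∂ν) = ENNReal.ofReal (B₁ b - B₁ a) := by
    rw [← hB1ab]
    exact (ofReal_integral_eq_lintegral_ofReal hB1'int
      (by filter_upwards [hν_ae_good] with t ht; exact (hB1'pos t ht).le)).symm
  have hL2'eq : (∫⁻ t, ENNReal.ofReal (B₂' t) ∂ν) = ENNReal.ofReal (B₂ b - B₂ a) := by
    rw [← hB2ab]
    exact (ofReal_integral_eq_lintegral_ofReal hB2'int
      (by filter_upwards [hν_ae_good] with t ht; exact hB2'nn t ht)).symm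
  have hL2'fin : (∫⁻ t, ENNReal.ofReal (B₂' t) ∂ν) ≠ ⊤ := by
    rw [hL2'eq]; exact ENNReal.ofReal_ne_top
  -- ### the key estimate for each cap n
  have key : ∀ n : ℕ, (M₀ : ℝ) ≤ (n : ℝ) → 1 ≤ (n : ℝ) →
      (∫⁻ t, ENNReal.ofReal (rinv (min (B₁' t) (n : ℝ))) ∂ν) + ENNReal.ofReal ε₀ * ν T₀
        ≤ ∫⁻ t, ENNReal.ofReal (rinv (B₂' t)) ∂ν := by
    intro n hnM hn1
    have hnpos : (0:ℝ) < n := lt_of_lt_of_le one_pos hn1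
    set g : ℝ → ℝ := fun t =>
      sSup (insert 0 ((fun s => Ψ (min (B₁' s) (n:ℝ))) '' (good ∩ Set.Iic t))) with hg_def
    have hgbdd : ∀ t : ℝ,
        ∀ z ∈ insert 0 ((fun s => Ψ (min (B₁' s) (n:ℝ))) '' (good ∩ Set.Iic t)), z ≤ Ψ n := by
      intro t z hz
      rcases Set.mem_insert_iff.mp hz with rfl | ⟨s, _, rfl⟩
      · exact hΨ_nn n
      · exact hΨ_mono (min_le_right _ _)
    have hgBdd : ∀ t : ℝ,
        BddAbove (insert 0 ((fun s => Ψ (min (B₁' s) (n:ℝ))) '' (good ∩ Set.Iic t))) :=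
      fun t => ⟨Ψ n, fun z hz => hgbdd t z hz⟩
    have hg_mono : Monotone g := by
      intro u v huv
      refine csSup_le_csSup (hgBdd v) (Set.insert_nonempty _ _) ?_
      exact Set.insert_subset_insert
        (Set.image_mono (Set.inter_subset_inter_right _ (Set.Iic_subset_Iic.mpr huv)))
    have hg_meas : Measurable g := hg_mono.measurable
    have hg_nn : ∀ t, 0 ≤ g t := fun t => le_csSup (hgBdd t) (Set.mem_insert _ _)
    have hg_le : ∀ t, g t ≤ Ψ n := fun t => csSup_le (Set.insert_nonempty _ _) (hgbdd t)
    have hminpos : ∀ t ∈ good, 0 < min (B₁' t) (n:ℝ) := fun t ht =>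
      lt_min (hB1'pos t ht) hnpos
    have hg_good : ∀ t ∈ good, g t = Ψ (min (B₁' t) (n:ℝ)) := by
      intro t ht
      refine le_antisymm (csSup_le (Set.insert_nonempty _ _) ?_) (le_csSup (hgBdd t) ?_)
      · intro z hz
        rcases Set.mem_insert_iff.mp hz with rfl | ⟨s, hs, rfl⟩
        · exact hΨ_nn _
        · exact hΨ_mono (min_le_min (hB1'mono s hs.1 t ht hs.2) le_rfl)
      · exact Set.mem_insert_of_mem _ ⟨t, ⟨ht, Set.mem_Iic.mpr le_rfl⟩, rfl⟩
    set Γ := hg_mono.stieltjesFunction with hΓ_def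
    set μ := Γ.measure with hμ_def
    have hΓa_nn : 0 ≤ Γ a := le_trans (hg_nn a) (hg_mono.le_rightLim le_rfl)
    have hΓae : ∀ᵐ t ∂ν, Γ t = g t := by
      have hcnt : Set.Countable {t | ¬ContinuousAt g t} := hg_mono.countable_not_continuousAt
      have hnull : ν {t | ¬ContinuousAt g t} = 0 :=
        le_antisymm (le_trans (Measure.restrict_apply_le _ _)
          (le_of_eq (hcnt.measure_zero volume))) zero_le
      filter_upwards [measure_eq_zero_iff_ae_notMem.mp hnull] with t ht
      have hct : ContinuousAt g t := not_not.mp ht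
      have hne : (nhdsWithin t (Set.Ioi t)).NeBot := inferInstance
      have h1 : Function.rightLim g t = g t :=
        rightLim_eq_of_tendsto
          (hct.tendsto.mono_left nhdsWithin_le_nhds)
      rw [hΓ_def, hg_mono.stieltjesFunction_eq, h1]
    -- comparison of the tail integrals
    have hKcomp : ∀ s : ℝ, (∫⁻ t in Set.Ici s, ENNReal.ofReal (min (B₁' t) (n:ℝ)) ∂ν)
        ≤ ∫⁻ t in Set.Ici s, ENNReal.ofReal (B₂' t) ∂ν := by
      intro s
      set c : ℝ := max a (min s b) with hc_def
      have hac : a ≤ c := le_max_left _ _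
      have hcb : c ≤ b := max_le hab.le (min_le_right _ _)
      have hrr : ν.restrict (Set.Ici s) = volume.restrict (Set.Ioc c b) := by
        rw [hν_def, Measure.restrict_restrict measurableSet_Ici]
        refine Measure.restrict_congr_set (MeasureTheory.ae_eq_set.mpr ⟨?_, ?_⟩)
        · refine measure_mono_null (?_ : _ ⊆ ({s} : Set ℝ)) (by simp)
          rintro t ⟨⟨hts, htg⟩, htn⟩
          simp only [Set.mem_singleton_iff]
          by_contra hne
          have htb : t ≤ b := (hgood_sub htg).2.le
          have hst : s < t := lt_of_le_of_ne hts (Ne.symm hne)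
          refine htn ⟨?_, htb⟩
          rw [hc_def]
          rw [max_lt_iff]
          exact ⟨(hgood_sub htg).1, lt_of_le_of_lt (min_le_left _ _) hst⟩
        · refine measure_mono_null (?_ : _ ⊆ ({b} : Set ℝ) ∪ (↑F₁ ∪ ↑F₂)) ?_
          · rintro t ⟨⟨hct, htb⟩, htn⟩
            by_cases htb' : t = b
            · exact Or.inl (by simp [htb'])
            refine Or.inr ?_
            have htIoo : t ∈ Set.Ioo a b :=
              ⟨lt_of_le_of_lt hac hct, lt_of_le_of_ne htb htb'⟩
            have hst : s ≤ t := by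
              rcases le_or_gt s b with hsb | hsb
              · have : min s b = s := min_eq_left hsb
                have h2 : min s b < t := lt_of_le_of_lt (le_max_right a _) hct
                rw [this] at h2
                exact h2.le
              · exfalso
                have : min s b = b := min_eq_right hsb.le
                have h2 : min s b < t := lt_of_le_of_lt (le_max_right a _) hct
                rw [this] at h2
                exact absurd htIoo.2 (not_lt.mpr h2.le)
            by_contra hF
            exact htn ⟨hst, ⟨htIoo, hF⟩⟩
          · exact measure_union_null (by simp)
              ((Set.Finite.union F₁.finite_toSet F₂.finite_toSet).measure_zero volume)
      have hgoodae : ∀ᵐ t ∂(volume.restrict (Set.Ioc c b)), t ∈ good := by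
        rw [hIocGood c b hac le_rfl]
        exact ae_restrict_of_ae hν_ae_good
      have h1int : Integrable B₁' (volume.restrict (Set.Ioc c b)) := by
        rw [hIocGood c b hac le_rfl]; exact hB1'int.restrict
      have h2int : Integrable B₂' (volume.restrict (Set.Ioc c b)) := by
        rw [hIocGood c b hac le_rfl]; exact hB2'int.restrict
      have e1 : ∫ t, B₁' t ∂(volume.restrict (Set.Ioc c b)) = B₁ b - B₁ c := by
        rw [show (∫ t, B₁' t ∂(volume.restrict (Set.Ioc c b)))
            = ∫ t in c..b, B₁' t from (intervalIntegral.integral_of_le hcb).symm]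
        exact hFTC B₁ B₁' F₁ hB₁c hB₁d hB1'int c ⟨hac, hcb⟩
      have e2 : ∫ t, B₂' t ∂(volume.restrict (Set.Ioc c b)) = B₂ b - B₂ c := by
        rw [show (∫ t, B₂' t ∂(volume.restrict (Set.Ioc c b)))
            = ∫ t in c..b, B₂' t from (intervalIntegral.integral_of_le hcb).symm]
        exact hFTC B₂ B₂' F₂ hB₂c hB₂d hB2'int c ⟨hac, hcb⟩
      calc (∫⁻ t in Set.Ici s, ENNReal.ofReal (min (B₁' t) (n:ℝ)) ∂ν)
          = ∫⁻ t, ENNReal.ofReal (min (B₁' t) (n:ℝ)) ∂(volume.restrict (Set.Ioc c b)) := by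
            rw [hrr]
        _ ≤ ∫⁻ t, ENNReal.ofReal (B₁' t) ∂(volume.restrict (Set.Ioc c b)) :=
            lintegral_mono (fun t => ENNReal.ofReal_le_ofReal (min_le_left _ _))
        _ = ENNReal.ofReal (∫ t, B₁' t ∂(volume.restrict (Set.Ioc c b))) :=
            (ofReal_integral_eq_lintegral_ofReal h1int
              (by filter_upwards [hgoodae] with t ht; exact (hB1'pos t ht).le)).symm
        _ ≤ ENNReal.ofReal (∫ t, B₂' t ∂(volume.restrict (Set.Ioc c b))) := by
            rw [e1, e2]
            refine ENNReal.ofReal_le_ofReal ?_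
            have := hDle c ⟨hac, hcb⟩
            linarith [heqb]
        _ = ∫⁻ t, ENNReal.ofReal (B₂' t) ∂(volume.restrict (Set.Ioc c b)) :=
            ofReal_integral_eq_lintegral_ofReal h2int
              (by filter_upwards [hgoodae] with t ht; exact hB2'nn t ht)
        _ = ∫⁻ t in Set.Ici s, ENNReal.ofReal (B₂' t) ∂ν := by rw [hrr]
    -- Tonelli--Stieltjes decomposition
    have hAmeas : MeasurableSet {p : ℝ × ℝ | a < p.2 ∧ p.2 ≤ p.1} :=
      (measurableSet_lt measurable_const measurable_snd).inter
        (measurableSet_le measurable_snd measurable_fst)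
    have htone : ∀ h : ℝ → ℝ, AEMeasurable h ν → (∀ᵐ t ∂ν, 0 ≤ h t) →
        (∫⁻ t, ENNReal.ofReal (g t * h t) ∂ν)
          = ENNReal.ofReal (Γ a) * (∫⁻ t, ENNReal.ofReal (h t) ∂ν)
            + ∫⁻ s, (if a < s then ∫⁻ t in Set.Ici s, ENNReal.ofReal (h t) ∂ν else 0) ∂μ := by
      intro h haeh hhnn
      have haeofh : AEMeasurable (fun t => ENNReal.ofReal (h t)) ν :=
        ENNReal.measurable_ofReal.comp_aemeasurable haeh
      have hpt : ∀ᵐ t ∂ν, ENNReal.ofReal (g t * h t)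
          = ENNReal.ofReal (Γ a) * ENNReal.ofReal (h t)
            + μ (Set.Ioc a t) * ENNReal.ofReal (h t) := by
        filter_upwards [hν_ae_good, hΓae] with t htg hΓt
        have h2 : Γ a ≤ Γ t := Γ.mono (hgood_sub htg).1.le
        have h3 : ENNReal.ofReal (Γ t) = ENNReal.ofReal (Γ a) + μ (Set.Ioc a t) := by
          rw [hμ_def, Γ.measure_Ioc,
            ← ENNReal.ofReal_add hΓa_nn (by linarith : (0:ℝ) ≤ Γ t - Γ a), add_sub_cancel]
        rw [ENNReal.ofReal_mul (hg_nn t), ← hΓt, h3, add_mul]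
      rw [lintegral_congr_ae hpt,
        lintegral_add_left' (haeofh.const_mul _),
        lintegral_const_mul' _ _ ENNReal.ofReal_ne_top]
      congr 1
      have hpt2 : ∀ t : ℝ, μ (Set.Ioc a t) * ENNReal.ofReal (h t)
          = ∫⁻ s, ({p : ℝ × ℝ | a < p.2 ∧ p.2 ≤ p.1}.indicator
              (fun _ => (1:ℝ≥0∞)) (t, s)) * ENNReal.ofReal (h t) ∂μ := by
        intro t
        rw [lintegral_mul_const' _ _ ENNReal.ofReal_ne_top]
        congr 1
        have : ∀ s : ℝ, ({p : ℝ × ℝ | a < p.2 ∧ p.2 ≤ p.1}.indicator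
            (fun _ => (1:ℝ≥0∞)) (t, s)) = (Set.Ioc a t).indicator (fun _ => (1:ℝ≥0∞)) s := by
          intro s
          by_cases hs : s ∈ Set.Ioc a t
          · rw [Set.indicator_of_mem hs, Set.indicator_of_mem]
            exact ⟨hs.1, hs.2⟩
          · rw [Set.indicator_of_notMem hs, Set.indicator_of_notMem]
            intro hc
            exact hs ⟨hc.1, hc.2⟩
        rw [lintegral_congr this, lintegral_indicator_const measurableSet_Ioc, one_mul]
      rw [lintegral_congr hpt2]
      have hf : AEMeasurable
          (Function.uncurry fun t s => ({p : ℝ × ℝ | a < p.2 ∧ p.2 ≤ p.1}.indicator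
            (fun _ => (1:ℝ≥0∞)) (t, s)) * ENNReal.ofReal (h t)) (ν.prod μ) := by
        have hm1 : Measurable (fun p : ℝ × ℝ =>
            ({q : ℝ × ℝ | a < q.2 ∧ q.2 ≤ q.1}.indicator (fun _ => (1:ℝ≥0∞)) p)) :=
          measurable_one.indicator hAmeas
        have hm2 : AEMeasurable (fun p : ℝ × ℝ => ENNReal.ofReal (h p.1)) (ν.prod μ) :=
          ENNReal.measurable_ofReal.comp_aemeasurable haeh.comp_fst
        exact (hm1.aemeasurable.mul hm2).congr
          (Filter.Eventually.of_forall (fun p => rfl))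
      rw [lintegral_lintegral_swap hf]
      refine lintegral_congr (fun s => ?_)
      by_cases has : a < s
      · rw [if_pos has, ← lintegral_indicator measurableSet_Ici]
        refine lintegral_congr (fun t => ?_)
        by_cases hts : t ∈ Set.Ici s
        · rw [Set.indicator_of_mem hts, Set.indicator_of_mem (by exact ⟨has, hts⟩), one_mul]
        · rw [Set.indicator_of_notMem hts, Set.indicator_of_notMem, zero_mul]
          intro hc
          exact hts hc.2
      · rw [if_neg has]
        have hz : ∀ t : ℝ, ({p : ℝ × ℝ | a < p.2 ∧ p.2 ≤ p.1}.indicator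
            (fun _ => (1:ℝ≥0∞)) (t, s)) * ENNReal.ofReal (h t) = 0 := by
          intro t
          rw [Set.indicator_of_notMem, zero_mul]
          exact fun hc => has hc.1
        rw [lintegral_congr hz, lintegral_zero]
    -- ### the master pointwise inequality
    have haec1 : AEMeasurable (fun t => min (B₁' t) (n:ℝ)) ν := haeB1'.min aemeasurable_const
    have haerinv2 : AEMeasurable (fun t => ENNReal.ofReal (rinv (B₂' t))) ν := by
      refine ENNReal.measurable_ofReal.comp_aemeasurable ?_
      have h1 : AEMeasurable (fun t => rinvE (B₂' t)) ν :=
        hrinvE_meas.comp_aemeasurable haeB2'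
      refine h1.congr ?_
      filter_upwards [hν_ae_good] with t ht
      exact hrinvE_eq _ (hB2'nn t ht)
    have haegB2 : AEMeasurable (fun t => ENNReal.ofReal (g t * B₂' t)) ν :=
      ENNReal.measurable_ofReal.comp_aemeasurable (hg_meas.aemeasurable.mul haeB2')
    have haegc1 : AEMeasurable (fun t => ENNReal.ofReal (g t * min (B₁' t) (n:ℝ))) ν :=
      ENNReal.measurable_ofReal.comp_aemeasurable (hg_meas.aemeasurable.mul haec1)
    have hconv1 : ∀ p q : ℝ, 0 ≤ p → 0 ≤ q →
        ENNReal.ofReal p + ENNReal.ofReal q = ENNReal.ofReal (p + q) :=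
      fun p q hp hq => (ENNReal.ofReal_add hp hq).symm
    have hmaster : ∀ᵐ t ∂ν,
        ENNReal.ofReal (rinv (min (B₁' t) (n:ℝ))) + ENNReal.ofReal (g t * B₂' t)
            + T₀.indicator (fun _ => ENNReal.ofReal ε₀) t
          ≤ ENNReal.ofReal (rinv (B₂' t)) + ENNReal.ofReal (g t * min (B₁' t) (n:ℝ)) := by
      filter_upwards [hν_ae_good, hT₀gap] with t htg hgap
      have hy := hB2'nn t htg
      have hx' := hminpos t htg
      have hgt : g t = psi rinv (min (B₁' t) (n:ℝ)) := by
        rw [hg_good t htg, hΨ_eq _ hx']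
      have hψnn : 0 ≤ psi rinv (min (B₁' t) (n:ℝ)) := (psi_pos hsc hrimono hx').le
      have hsub : rinv (min (B₁' t) (n:ℝ))
          + psi rinv (min (B₁' t) (n:ℝ)) * (B₂' t - min (B₁' t) (n:ℝ)) ≤ rinv (B₂' t) :=
        psi_subgrad_le hsc hx' hy
      rw [mul_sub] at hsub
      have hrx' : 0 ≤ rinv (min (B₁' t) (n:ℝ)) := hrinn _ hx'.le
      have hry : 0 ≤ rinv (B₂' t) := hrinn _ hy
      by_cases htT : t ∈ T₀
      · have hxM : B₁' t ≤ (M₀:ℝ) := htT.1.2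
        have hmin_eq : min (B₁' t) (n:ℝ) = B₁' t := min_eq_left (hxM.trans hnM)
        have hgap' := hgap htT
        rw [hgp_good t htg] at hgap'
        rw [Set.indicator_of_mem htT, hgt,
          hconv1 _ _ hrx' (mul_nonneg hψnn hy),
          hconv1 _ _ (add_nonneg hrx' (mul_nonneg hψnn hy)) hε₀pos.le,
          hconv1 _ _ hry (mul_nonneg hψnn hx'.le)]
        refine ENNReal.ofReal_le_ofReal ?_
        rw [hmin_eq] at *
        nlinarith [hgap']
      · rw [Set.indicator_of_notMem htT, add_zero, hgt,
          hconv1 _ _ hrx' (mul_nonneg hψnn hy),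
          hconv1 _ _ hry (mul_nonneg hψnn hx'.le)]
        refine ENNReal.ofReal_le_ofReal ?_
        linarith
    -- ### integrate the master inequality
    have hLmaster := lintegral_mono_ae hmaster
    rw [lintegral_add_left' ((haeR n).fun_add haegB2) _,
      lintegral_add_left' (haeR n) _,
      lintegral_indicator_const hT₀_meas,
      lintegral_add_left' haerinv2 _] at hLmaster
    -- ### the Stieltjes comparison S1 ≤ S2
    have hS12 : (∫⁻ t, ENNReal.ofReal (g t * min (B₁' t) (n:ℝ)) ∂ν)
        ≤ ∫⁻ t, ENNReal.ofReal (g t * B₂' t) ∂ν := by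
      rw [htone _ haec1 (by filter_upwards [hν_ae_good] with t ht; exact (hminpos t ht).le),
        htone _ haeB2' (by filter_upwards [hν_ae_good] with t ht; exact hB2'nn t ht)]
      refine add_le_add ?_ ?_
      · refine mul_le_mul_right ?_ _
        calc (∫⁻ t, ENNReal.ofReal (min (B₁' t) (n:ℝ)) ∂ν)
            ≤ ∫⁻ t, ENNReal.ofReal (B₁' t) ∂ν :=
              lintegral_mono (fun t => ENNReal.ofReal_le_ofReal (min_le_left _ _))
          _ = ENNReal.ofReal (B₁ b - B₁ a) := hL1'eq
          _ = ENNReal.ofReal (B₂ b - B₂ a) := by rw [heqa, heqb]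
          _ = ∫⁻ t, ENNReal.ofReal (B₂' t) ∂ν := hL2'eq.symm
      · refine lintegral_mono (fun s => ?_)
        by_cases has : a < s
        · rw [if_pos has, if_pos has]
          exact hKcomp s
        · rw [if_neg has, if_neg has]
    -- ### finiteness of S2
    have hS2fin : (∫⁻ t, ENNReal.ofReal (g t * B₂' t) ∂ν) ≠ ⊤ := by
      have hb1 : (∫⁻ t, ENNReal.ofReal (g t * B₂' t) ∂ν)
          ≤ ENNReal.ofReal (Ψ n) * ∫⁻ t, ENNReal.ofReal (B₂' t) ∂ν := by
        rw [← lintegral_const_mul' _ _ ENNReal.ofReal_ne_top]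
        refine lintegral_mono_ae ?_
        filter_upwards [hν_ae_good] with t ht
        rw [← ENNReal.ofReal_mul (hΨ_nn n)]
        exact ENNReal.ofReal_le_ofReal
          (mul_le_mul_of_nonneg_right (hg_le t) (hB2'nn t ht))
      refine ne_top_of_le_ne_top ?_ hb1
      exact (ENNReal.mul_lt_top ENNReal.ofReal_lt_top (lt_of_le_of_ne le_top hL2'fin)).ne
    -- ### combine
    have hfin : (∫⁻ t, ENNReal.ofReal (rinv (min (B₁' t) (n:ℝ))) ∂ν)
        + ENNReal.ofReal ε₀ * ν T₀ + (∫⁻ t, ENNReal.ofReal (g t * B₂' t) ∂ν)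
        ≤ (∫⁻ t, ENNReal.ofReal (rinv (B₂' t)) ∂ν)
          + (∫⁻ t, ENNReal.ofReal (g t * B₂' t) ∂ν) := by
      calc (∫⁻ t, ENNReal.ofReal (rinv (min (B₁' t) (n:ℝ))) ∂ν)
            + ENNReal.ofReal ε₀ * ν T₀ + (∫⁻ t, ENNReal.ofReal (g t * B₂' t) ∂ν)
          = (∫⁻ t, ENNReal.ofReal (rinv (min (B₁' t) (n:ℝ))) ∂ν)
            + (∫⁻ t, ENNReal.ofReal (g t * B₂' t) ∂ν) + ENNReal.ofReal ε₀ * ν T₀ := by ring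
        _ ≤ (∫⁻ t, ENNReal.ofReal (rinv (B₂' t)) ∂ν)
            + (∫⁻ t, ENNReal.ofReal (g t * min (B₁' t) (n:ℝ)) ∂ν) := hLmaster
        _ ≤ (∫⁻ t, ENNReal.ofReal (rinv (B₂' t)) ∂ν)
            + (∫⁻ t, ENNReal.ofReal (g t * B₂' t) ∂ν) := add_le_add_right hS12 _
    exact (ENNReal.add_le_add_iff_right hS2fin).mp hfin
  -- ### monotone convergence in the cap
  have hminmem : ∀ t ∈ good, ∀ m : ℕ, min (B₁' t) (m:ℝ) ∈ Set.Ici (0:ℝ) := fun t ht m =>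
    Set.mem_Ici.mpr (le_min (hB1'pos t ht).le (Nat.cast_nonneg m))
  have hmct : (∫⁻ t, ENNReal.ofReal (rinv (B₁' t)) ∂ν)
      = ⨆ m : ℕ, ∫⁻ t, ENNReal.ofReal (rinv (min (B₁' t) (m:ℝ))) ∂ν := by
    rw [← lintegral_iSup' haeR ?_]
    · refine lintegral_congr_ae ?_
      filter_upwards [hν_ae_good] with t ht
      obtain ⟨m, hm⟩ := exists_nat_ge (B₁' t)
      refine le_antisymm ?_ ?_
      · refine le_iSup_of_le m ?_
        rw [min_eq_left hm]
      · refine iSup_le fun m' => ENNReal.ofReal_le_ofReal ?_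
        exact hrinvmonoOn (hminmem t ht m') (Set.mem_Ici.mpr (hB1'pos t ht).le) (min_le_left _ _)
    · filter_upwards [hν_ae_good] with t ht
      intro p q hpq
      refine ENNReal.ofReal_le_ofReal ?_
      exact hrinvmonoOn (hminmem t ht p) (hminmem t ht q)
        (min_le_min le_rfl (Nat.cast_le.mpr hpq))
  have hsup_le : (∫⁻ t, ENNReal.ofReal (rinv (B₁' t)) ∂ν) + ENNReal.ofReal ε₀ * ν T₀
      ≤ ∫⁻ t, ENNReal.ofReal (rinv (B₂' t)) ∂ν := by
    rw [hmct, ENNReal.iSup_add]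
    refine iSup_le fun m => ?_
    set p := max m (max M₀ 1) with hp_def
    have h1 : (M₀:ℝ) ≤ (p:ℝ) := Nat.cast_le.mpr (le_trans (le_max_left _ _) (le_max_right _ _))
    have h2 : (1:ℝ) ≤ (p:ℝ) := by
      exact_mod_cast le_trans (le_max_right M₀ 1) (le_max_right m _)
    refine le_trans (add_le_add ?_ le_rfl) (key p h1 h2)
    refine lintegral_mono_ae ?_
    filter_upwards [hν_ae_good] with t ht
    refine ENNReal.ofReal_le_ofReal ?_
    exact hrinvmonoOn (hminmem t ht m) (hminmem t ht p)
      (min_le_min le_rfl (Nat.cast_le.mpr (le_max_left _ _)))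
  -- ### back to real integrals
  have hE1 : ENNReal.ofReal (∫ t in a..b, rinv (B₁' t))
      = ∫⁻ t, ENNReal.ofReal (rinv (B₁' t)) ∂ν := by
    rw [(hIId _ hB₁int).2]
    exact ofReal_integral_eq_lintegral_ofReal hInt1ν
      (by filter_upwards [hν_ae_good] with t ht; exact hrinn _ (hB1'pos t ht).le)
  have hE2 : ENNReal.ofReal (∫ t in a..b, rinv (B₂' t))
      = ∫⁻ t, ENNReal.ofReal (rinv (B₂' t)) ∂ν := by
    rw [(hIId _ hB₂int).2]
    exact ofReal_integral_eq_lintegral_ofReal hInt2ν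
      (by filter_upwards [hν_ae_good] with t ht; exact hrinn _ (hB2'nn t ht))
  have hδ : ENNReal.ofReal ε₀ * ν T₀ ≠ 0 :=
    (ENNReal.mul_pos (ENNReal.ofReal_pos.mpr hε₀pos).ne' hT₀pos.ne').ne'
  have hlt : ENNReal.ofReal (∫ t in a..b, rinv (B₁' t))
      < ENNReal.ofReal (∫ t in a..b, rinv (B₂' t)) := by
    rw [hE1, hE2]
    calc (∫⁻ t, ENNReal.ofReal (rinv (B₁' t)) ∂ν)
        < (∫⁻ t, ENNReal.ofReal (rinv (B₁' t)) ∂ν) + ENNReal.ofReal ε₀ * ν T₀ :=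
          ENNReal.lt_add_right (by rw [← hE1]; exact ENNReal.ofReal_ne_top) hδ
      _ ≤ _ := hsup_le
  by_contra hcon
  push_neg at hcon
  exact absurd hlt (not_lt.mpr (ENNReal.ofReal_le_ofReal hcon))
end

section
/- Let p_on be an online policy, let t_n ∈ [0,T), and assume B_s is continuously differentiable on [t_n, T] with 0 ≤ B_s′(t) ≤ M there, and that p_on follows the data branch on (t_n, T), i.e. r(p_on(t)) = (B_s(t) − B_on(t)) / (T − t + ε) for all t ∈ (t_n, T). Then B_s(T) − B_on(T) = ∫_{t_n}^{T} (ε/(T−t+ε)) B_s′(t) dt + (ε/(T−t_n+ε)) (B_s(t_n) − B_on(t_n)). Consequently, 0 ≤ B_s(T) − B_on(T) ≤ ε·M·log((T−t_n+ε)/ε) + (ε/(T−t_n+ε))·B_s(t_n), which tends to 0 as ε → 0⁺; i.e. in the limit ε → 0 the online policy transmits all the arrived data. -/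
open MeasureTheory Topology Filter

/-- The transmitted energy curve of a policy. -/
noncomputable def eCurve (p : ℝ → ℝ) (t : ℝ) : ℝ := ∫ s in (0 : ℝ)..t, p s

/-- The transmitted data curve of a policy. -/
noncomputable def bCurve (r p : ℝ → ℝ) (t : ℝ) : ℝ := ∫ s in (0 : ℝ)..t, r (p s)

/-- A feasible (offline) policy on `[0,T]`: nonnegative, piecewise continuous,
satisfying energy and data causality. -/
def Feasible (r Es Bs : ℝ → ℝ) (T : ℝ) (p : ℝ → ℝ) : Prop :=
  (∀ t ∈ Set.Icc (0 : ℝ) T, 0 ≤ p t) ∧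
  (∃ F : Finset ℝ, ∀ t ∈ Set.Icc (0 : ℝ) T, t ∉ F → ContinuousAt p t) ∧
  ∀ t ∈ Set.Icc (0 : ℝ) T, eCurve p t ≤ Es t ∧ bCurve r p t ≤ Bs t

/-- An online policy on `[0,T)` with parameter `ε > 0`: a nonnegative piecewise
continuous function which, at each of its continuity points, equals the minimum of
the data branch `r⁻¹((B_s(t) − B_on(t))/(T − t + ε))` and the energy branch
`(E_s(t) − E_on(t))/(T − t + ε)`. -/
def IsOnline (r rinv Es Bs : ℝ → ℝ) (T ε : ℝ) (p : ℝ → ℝ) : Prop :=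
  (∀ t ∈ Set.Ico (0 : ℝ) T, 0 ≤ p t) ∧
  (∃ F : Finset ℝ, ∀ t ∈ Set.Ico (0 : ℝ) T, t ∉ F → ContinuousAt p t) ∧
  ∀ t ∈ Set.Ico (0 : ℝ) T, ContinuousAt p t →
    p t = min (rinv ((Bs t - bCurve r p t) / (T - t + ε)))
              ((Es t - eCurve p t) / (T - t + ε))

/-- if the online policy follows the data branch on `(t_n, T)`
and `B_s` is continuously differentiable there with `0 ≤ B_s′ ≤ M`, then the
remaining data at the deadline satisfies the stated identity, is nonnegative, is
bounded by `ε·M·log((T−t_n+ε)/ε) + (ε/(T−t_n+ε))·B_s(t_n)`, and this bound tends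
to `0` as `ε → 0⁺` (so in the limit the online policy transmits all the data). -/
theorem online_data_branch_sends_all_data
    (r rinv Es Bs : ℝ → ℝ) (hr : RateFn r)
    (hrinv_left : ∀ x : ℝ, 0 ≤ x → rinv (r x) = x)
    (hrinv_right : ∀ y : ℝ, 0 ≤ y → r (rinv y) = y)
    (T ε : ℝ) (hT : 0 < T) (hε : 0 < ε)
    (hEsm : MonotoneOn Es (Set.Icc 0 T)) (hBsm : MonotoneOn Bs (Set.Icc 0 T))
    (hEs0 : ∀ t ∈ Set.Icc (0 : ℝ) T, 0 ≤ Es t)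
    (hBs0 : ∀ t ∈ Set.Icc (0 : ℝ) T, 0 ≤ Bs t)
    (pon : ℝ → ℝ) (hon : IsOnline r rinv Es Bs T ε pon)
    (tn : ℝ) (htn : tn ∈ Set.Ico (0 : ℝ) T)
    (M : ℝ) (Bs' : ℝ → ℝ)
    (hBsd : ∀ t ∈ Set.Icc tn T, HasDerivAt Bs (Bs' t) t)
    (hBs'c : ContinuousOn Bs' (Set.Icc tn T))
    (hBs'b : ∀ t ∈ Set.Icc tn T, 0 ≤ Bs' t ∧ Bs' t ≤ M)
    (hbranch : ∀ t ∈ Set.Ioo tn T,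
      r (pon t) = (Bs t - bCurve r pon t) / (T - t + ε)) :
    Bs T - bCurve r pon T =
      (∫ t in tn..T, (ε / (T - t + ε)) * Bs' t) +
        (ε / (T - tn + ε)) * (Bs tn - bCurve r pon tn) ∧
    0 ≤ Bs T - bCurve r pon T ∧
    Bs T - bCurve r pon T ≤
      ε * M * Real.log ((T - tn + ε) / ε) + (ε / (T - tn + ε)) * Bs tn ∧
    Filter.Tendsto
      (fun e : ℝ => e * M * Real.log ((T - tn + e) / e) + (e / (T - tn + e)) * Bs tn)
      (nhdsWithin 0 (Set.Ioi 0)) (nhds 0) := by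
  obtain ⟨htn0, htnT⟩ := htn
  have htnle : tn ≤ T := htnT.le
  obtain ⟨hpos, ⟨F, hF⟩, hmin⟩ := hon
  set f : ℝ → ℝ := fun t => r (pon t) with hf_def
  set g : ℝ → ℝ := bCurve r pon with hg_def
  have hg_eq : ∀ t : ℝ, g t = ∫ s in (0:ℝ)..t, f s := fun t => rfl
  have hu : ∀ t : ℝ, t ≤ T → 0 < T - t + ε := fun t ht => by linarith
  have hfnonneg : ∀ t ∈ Set.Ico (0:ℝ) T, 0 ≤ f t := fun t ht => hr.nonneg _ (hpos t ht)
  -- a.e. bound on f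
  set K : ℝ := max (r (Es T / ε)) 0 with hK_def
  have hfb : ∀ t ∈ Set.Ico (0:ℝ) T, t ∉ F → 0 ≤ f t ∧ f t ≤ K := by
    intro t ht htF
    have hpt : 0 ≤ pon t := hpos t ht
    have hmin' := hmin t ht (hF t ht htF)
    have hecurve : 0 ≤ eCurve pon t := by
      apply intervalIntegral.integral_nonneg ht.1
      intro s hs
      exact hpos s ⟨hs.1, lt_of_le_of_lt hs.2 ht.2⟩
    have hEsT : Es t ≤ Es T := hEsm ⟨ht.1, ht.2.le⟩ ⟨hT.le, le_rfl⟩ ht.2.le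
    have hponle : pon t ≤ Es T / ε := by
      have h1 : pon t ≤ (Es t - eCurve pon t) / (T - t + ε) := hmin' ▸ min_le_right _ _
      have h2 : (Es t - eCurve pon t) / (T - t + ε) ≤ Es T / ε :=
        div_le_div₀ (hEs0 T ⟨hT.le, le_rfl⟩) (by linarith) hε (by linarith [ht.2.le])
      exact h1.trans h2
    refine ⟨hfnonneg t ht, ?_⟩
    have : r (pon t) ≤ r (Es T / ε) :=
      hr.mono.monotoneOn (Set.mem_Ici.2 hpt) (Set.mem_Ici.2 (hpt.trans hponle)) hponle
    exact this.trans (le_max_left _ _)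
  -- integrability of f on [0, T]
  set s : Set ℝ := Set.Ioo 0 T \ ↑F with hs_def
  have hs_open : IsOpen s := isOpen_Ioo.sdiff (F.finite_toSet.isClosed)
  have hfc : ContinuousOn f s := by
    intro t ht
    exact ((hr.cont.continuousAt).comp (hF t ⟨ht.1.1.le, ht.1.2⟩ ht.2)).continuousWithinAt
  have hrestr : volume.restrict (Set.Ioc 0 T) = volume.restrict s := by
    apply MeasureTheory.Measure.restrict_congr_set
    rw [MeasureTheory.ae_eq_set]
    constructor
    · refine measure_mono_null ?_ ((F.finite_toSet.insert T).measure_zero volume)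
      intro x hx
      rcases Classical.em (x ∈ (↑F : Set ℝ)) with hxF | hxF
      · exact Set.mem_insert_of_mem _ hxF
      · have h1 : x ∉ Set.Ioo 0 T := fun hxo => hx.2 ⟨hxo, hxF⟩
        have h2 : x = T := le_antisymm hx.1.2 (not_lt.1 (fun hlt => h1 ⟨hx.1.1, hlt⟩))
        exact h2 ▸ Set.mem_insert _ _
    · have : s \ Set.Ioc 0 T = ∅ := by
        rw [Set.diff_eq_empty]
        exact fun x hx => ⟨hx.1.1, hx.1.2.le⟩
      rw [this]; exact measure_empty
  have hAESM : AEStronglyMeasurable f (volume.restrict (Set.Ioc 0 T)) := by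
    rw [hrestr]; exact hfc.aestronglyMeasurable hs_open.measurableSet
  have hbound : ∀ᵐ t ∂(volume.restrict (Set.Ioc 0 T)), ‖f t‖ ≤ K := by
    rw [hrestr]
    refine (MeasureTheory.ae_restrict_iff' hs_open.measurableSet).2
      (Filter.Eventually.of_forall ?_)
    intro t ht
    obtain ⟨h0, h1⟩ := hfb t ⟨ht.1.1.le, ht.1.2⟩ ht.2
    rwa [Real.norm_eq_abs, abs_of_nonneg h0]
  have hIntT : IntegrableOn f (Set.Ioc 0 T) := by
    have hconst : IntegrableOn (fun _ : ℝ => K) (Set.Ioc 0 T) :=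
      integrableOn_const measure_Ioc_lt_top.ne
    exact hconst.mono' hAESM hbound
  have hInt : ∀ t ∈ Set.Icc (0:ℝ) T, IntervalIntegrable f volume 0 t := by
    intro t ht
    rw [intervalIntegrable_iff_integrableOn_Ioc_of_le ht.1]
    exact hIntT.mono_set (Set.Ioc_subset_Ioc_right ht.2)
  have hgcont : ContinuousOn g (Set.Icc 0 T) := by
    have h1 : IntegrableOn f (Set.uIcc 0 T) := by
      rw [Set.uIcc_of_le hT.le, integrableOn_Icc_iff_integrableOn_Ioc]
      exact hIntT
    have := intervalIntegral.continuousOn_primitive_interval (μ := volume) (a := 0) (b := T) h1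
    rw [Set.uIcc_of_le hT.le] at this
    exact this
  -- branch facts on (tn, T)
  have hDfact : ∀ t ∈ Set.Ioo tn T, Bs t - g t = (T - t + ε) * f t := by
    intro t ht
    have hb := hbranch t ht
    rw [eq_div_iff (hu t ht.2.le).ne'] at hb
    have : f t * (T - t + ε) = Bs t - g t := hb
    linarith [this]
  have hDnonneg : ∀ t ∈ Set.Ioo tn T, 0 ≤ Bs t - g t := by
    intro t ht
    rw [hDfact t ht]
    exact mul_nonneg (hu t ht.2.le).le (hfnonneg t ⟨htn0.trans ht.1.le, ht.2⟩)
  have hBsCA : ∀ t ∈ Set.Icc tn T, ContinuousAt Bs t := fun t ht => (hBsd t ht).continuousAt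
  have hgCA : ∀ t ∈ Set.Ioo tn T, ContinuousAt g t := by
    intro t ht
    exact hgcont.continuousAt (Icc_mem_nhds (lt_of_le_of_lt htn0 ht.1) ht.2)
  have hfCA : ∀ t ∈ Set.Ioo tn T, ContinuousAt f t := by
    intro t ht
    have hq : ContinuousAt (fun t => (Bs t - g t) / (T - t + ε)) t := by
      apply ContinuousAt.div
      · exact (hBsCA t ⟨ht.1.le, ht.2.le⟩).sub (hgCA t ht)
      · fun_prop
      · exact (hu t ht.2.le).ne'
    apply hq.congr
    filter_upwards [isOpen_Ioo.mem_nhds ht] with x hx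
    rw [hDfact x hx]
    exact mul_div_cancel_left₀ _ ((hu x hx.2.le).ne')
  have hfc' : ContinuousOn f (Set.Ioo tn T) := fun t ht => (hfCA t ht).continuousWithinAt
  have hgderiv : ∀ t ∈ Set.Ioo tn T, HasDerivAt g (f t) t := by
    intro t ht
    exact intervalIntegral.integral_hasDerivAt_right
      (hInt t ⟨htn0.trans ht.1.le, ht.2.le⟩)
      (hfc'.stronglyMeasurableAtFilter isOpen_Ioo t ht) (hfCA t ht)
  have huderiv : ∀ t : ℝ, HasDerivAt (fun t : ℝ => T - t + ε) (-1) t := by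
    intro t
    simpa using ((hasDerivAt_id t).const_sub T).add_const ε
  have hhderiv : ∀ t ∈ Set.Ioo tn T,
      HasDerivAt (fun t => (Bs t - g t) / (T - t + ε)) (Bs' t / (T - t + ε)) t := by
    intro t ht
    have hune := (hu t ht.2.le).ne'
    have h1 : HasDerivAt (fun t => Bs t - g t) (Bs' t - f t) t :=
      (hBsd t ⟨ht.1.le, ht.2.le⟩).sub (hgderiv t ht)
    have h2 : HasDerivAt (fun t => (Bs t - g t) / (T - t + ε)) _ t := h1.div (huderiv t) hune
    convert h2 using 1
    rw [hDfact t ht]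
    field_simp
    ring
  have hgIcc : ContinuousOn g (Set.Icc tn T) := hgcont.mono (Set.Icc_subset_Icc_left htn0)
  have hDcont : ContinuousOn (fun t => Bs t - g t) (Set.Icc tn T) := by
    intro t ht
    exact ((hBsCA t ht).continuousWithinAt).sub (hgIcc t ht)
  have hucont : ContinuousOn (fun t : ℝ => T - t + ε) (Set.Icc tn T) := by fun_prop
  have hhcont : ContinuousOn (fun t => (Bs t - g t) / (T - t + ε)) (Set.Icc tn T) :=
    hDcont.div hucont (fun t ht => (hu t ht.2).ne')
  have hφcont : ContinuousOn (fun t => Bs' t / (T - t + ε)) (Set.Icc tn T) :=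
    hBs'c.div hucont (fun t ht => (hu t ht.2).ne')
  have hφint : IntervalIntegrable (fun t => Bs' t / (T - t + ε)) volume tn T :=
    hφcont.intervalIntegrable_of_Icc htnle
  have key := intervalIntegral.integral_eq_sub_of_hasDeriv_right_of_le htnle hhcont
    (fun x hx => (hhderiv x hx).hasDerivWithinAt) hφint
  have hε' : (ε : ℝ) ≠ 0 := hε.ne'
  have hutn : (T - tn + ε) ≠ 0 := (hu tn htnle).ne'
  have id1 : (∫ t in tn..T, (ε / (T - t + ε)) * Bs' t)
      = ε * ∫ t in tn..T, Bs' t / (T - t + ε) := by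
    rw [← intervalIntegral.integral_const_mul]
    apply intervalIntegral.integral_congr
    intro t _
    ring
  have hmain : Bs T - g T =
      (∫ t in tn..T, (ε / (T - t + ε)) * Bs' t) + (ε / (T - tn + ε)) * (Bs tn - g tn) := by
    rw [id1, key]
    have hTT : T - T + ε = ε := by ring
    rw [hTT]
    field_simp
    ring
  refine ⟨hmain, ?_, ?_, ?_⟩
  · -- nonnegativity
    have hne : (𝓝[Set.Ioo tn T] T).NeBot := right_nhdsWithin_Ioo_neBot htnT
    have htend : Filter.Tendsto (fun t => Bs t - g t) (𝓝[Set.Ioo tn T] T) (𝓝 (Bs T - g T)) :=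
      (hDcont T (Set.right_mem_Icc.2 htnle)).mono_left
        (nhdsWithin_mono T Set.Ioo_subset_Icc_self)
    exact ge_of_tendsto htend (eventually_mem_nhdsWithin.mono (fun x hx => hDnonneg x hx))
  · -- upper bound
    rw [hmain]
    have hεu : 0 ≤ ε / (T - tn + ε) := div_nonneg hε.le (hu tn htnle).le
    have hint1 : IntervalIntegrable (fun t => (ε / (T - t + ε)) * Bs' t) volume tn T := by
      apply ContinuousOn.intervalIntegrable_of_Icc htnle
      exact (continuousOn_const.div hucont (fun t ht => (hu t ht.2).ne')).mul hBs'c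
    have hint2 : IntervalIntegrable (fun t => (ε / (T - t + ε)) * M) volume tn T := by
      apply ContinuousOn.intervalIntegrable_of_Icc htnle
      exact (continuousOn_const.div hucont (fun t ht => (hu t ht.2).ne')).mul continuousOn_const
    have hle : (∫ t in tn..T, (ε / (T - t + ε)) * Bs' t)
        ≤ ∫ t in tn..T, (ε / (T - t + ε)) * M := by
      apply intervalIntegral.integral_mono_on htnle hint1 hint2
      intro x hx
      have hb := hBs'b x hx
      have hd : 0 ≤ ε / (T - x + ε) := div_nonneg hε.le (hu x hx.2).le
      exact mul_le_mul_of_nonneg_left hb.2 hd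
    have hlog : (∫ t in tn..T, (T - t + ε)⁻¹) = Real.log ((T - tn + ε) / ε) := by
      have hderiv : ∀ t ∈ Set.uIcc tn T,
          HasDerivAt (fun t : ℝ => -Real.log (T - t + ε)) ((T - t + ε)⁻¹) t := by
        intro t ht
        rw [Set.uIcc_of_le htnle] at ht
        have hpos := hu t ht.2
        have h1 : HasDerivAt (fun t : ℝ => Real.log (T - t + ε)) ((T - t + ε)⁻¹ * (-1)) t :=
          by have h := (Real.hasDerivAt_log hpos.ne').comp t (huderiv t); exact h
        have h3 := h1.neg
        simp only [mul_neg, mul_one, neg_neg] at h3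
        exact h3
      have hcont : IntervalIntegrable (fun t : ℝ => (T - t + ε)⁻¹) volume tn T := by
        apply ContinuousOn.intervalIntegrable_of_Icc htnle
        exact hucont.inv₀ (fun t ht => (hu t ht.2).ne')
      rw [intervalIntegral.integral_eq_sub_of_hasDerivAt hderiv hcont]
      rw [Real.log_div (by positivity) hε']
      rw [show T - T + ε = ε by ring]
      ring
    have hcomp : (∫ t in tn..T, (ε / (T - t + ε)) * M) = ε * M * Real.log ((T - tn + ε) / ε) := by
      rw [← hlog, ← intervalIntegral.integral_const_mul]
      apply intervalIntegral.integral_congr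
      intro t _
      ring
    have hterm2 : (ε / (T - tn + ε)) * (Bs tn - g tn) ≤ (ε / (T - tn + ε)) * Bs tn := by
      apply mul_le_mul_of_nonneg_left _ hεu
      have hg0 : 0 ≤ g tn := by
        rw [hg_eq]
        apply intervalIntegral.integral_nonneg htn0
        intro u hu'
        exact hfnonneg u ⟨hu'.1, lt_of_le_of_lt hu'.2 htnT⟩
      linarith
    calc (∫ t in tn..T, (ε / (T - t + ε)) * Bs' t) + (ε / (T - tn + ε)) * (Bs tn - g tn)
        ≤ (∫ t in tn..T, (ε / (T - t + ε)) * M) + (ε / (T - tn + ε)) * Bs tn := by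
          exact add_le_add hle hterm2
      _ = ε * M * Real.log ((T - tn + ε) / ε) + (ε / (T - tn + ε)) * Bs tn := by rw [hcomp]
  · -- the limit
    have hTtn : 0 < T - tn := by linarith
    have t1 : Filter.Tendsto (fun e : ℝ => e * Real.log (T - tn + e))
        (nhdsWithin 0 (Set.Ioi 0)) (𝓝 0) := by
      have hc : ContinuousAt (fun e : ℝ => e * Real.log (T - tn + e)) 0 := by
        apply ContinuousAt.mul continuousAt_id
        have hlogc : ContinuousAt Real.log (T - tn + 0) := by
          apply Real.continuousAt_log
          norm_num
          linarith
        exact hlogc.comp (by fun_prop)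
      have h2 := hc.tendsto.mono_left (nhdsWithin_le_nhds (s := Set.Ioi 0))
      simpa using h2
    have t2 : Filter.Tendsto (fun e : ℝ => Real.log e * e)
        (nhdsWithin 0 (Set.Ioi 0)) (𝓝 0) := by
      simpa using tendsto_log_mul_rpow_nhdsGT_zero one_pos
    have t3 : Filter.Tendsto (fun e : ℝ => e / (T - tn + e) * Bs tn)
        (nhdsWithin 0 (Set.Ioi 0)) (𝓝 0) := by
      have hc : ContinuousAt (fun e : ℝ => e / (T - tn + e) * Bs tn) 0 := by
        apply ContinuousAt.mul _ continuousAt_const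
        exact ContinuousAt.div continuousAt_id (by fun_prop) (by norm_num; linarith)
      have h2 := hc.tendsto.mono_left (nhdsWithin_le_nhds (s := Set.Ioi 0))
      simpa using h2
    have comb := ((t1.const_mul M).sub (t2.const_mul M)).add t3
    simp only [mul_zero, sub_zero, add_zero] at comb
    apply comb.congr'
    filter_upwards [self_mem_nhdsWithin] with e (he : e ∈ Set.Ioi 0)
    have he0 : (0:ℝ) < e := he
    rw [Real.log_div (by linarith) he0.ne']
    ring
end

section
/- Let p_on be an online policy, nondecreasing at its continuity points, and let τ ∈ (0,T) be a point of continuity of p_on at which the data branch is active, i.e. r(p_on(τ)) = (B_s(τ) − B_on(τ)) / (T − τ + ε). Then B_on(T) ≥ ((T − τ)/(T − τ + ε))·B_s(τ). Consequently, since every feasible policy p satisfies ∫₀ᵀ r(p(t)) dt ≤ B_s(T), if B_off(T) = ∫₀ᵀ r(p(t)) dt > 0 for a feasible policy p and B_s(T) > 0, then B_on(T)/B_off(T) ≥ (B_s(τ)/B_s(T))·((T − τ)/(T − τ + ε)). -/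
open MeasureTheory

/-- if the online policy (nondecreasing at continuity points) is
on the data branch at a continuity point `τ ∈ (0,T)`, then
`B_on(T) ≥ ((T−τ)/(T−τ+ε))·B_s(τ)`; since every feasible policy transmits at most
`B_s(T)` data, the online-to-offline data ratio is at least
`(B_s(τ)/B_s(T))·((T−τ)/(T−τ+ε))`. -/
theorem online_ratio_data_branch
    (r rinv Es Bs : ℝ → ℝ) (hr : RateFn r)
    (hrinv_left : ∀ x : ℝ, 0 ≤ x → rinv (r x) = x)
    (hrinv_right : ∀ y : ℝ, 0 ≤ y → r (rinv y) = y)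
    (T ε : ℝ) (hT : 0 < T) (hε : 0 < ε)
    (hEsm : MonotoneOn Es (Set.Icc 0 T)) (hBsm : MonotoneOn Bs (Set.Icc 0 T))
    (hEs0 : ∀ t ∈ Set.Icc (0 : ℝ) T, 0 ≤ Es t)
    (hBs0 : ∀ t ∈ Set.Icc (0 : ℝ) T, 0 ≤ Bs t)
    (pon : ℝ → ℝ) (hon : IsOnline r rinv Es Bs T ε pon)
    (hmono : ∀ s ∈ Set.Ico (0 : ℝ) T, ∀ t ∈ Set.Ico (0 : ℝ) T, s < t →
      ContinuousAt pon s → ContinuousAt pon t → pon s ≤ pon t)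
    (τ : ℝ) (hτ : τ ∈ Set.Ioo (0 : ℝ) T) (hcτ : ContinuousAt pon τ)
    (hbranch : r (pon τ) = (Bs τ - bCurve r pon τ) / (T - τ + ε)) :
    ((T - τ) / (T - τ + ε)) * Bs τ ≤ bCurve r pon T ∧
    (∀ p : ℝ → ℝ, Feasible r Es Bs T p → bCurve r p T ≤ Bs T) ∧
    (∀ p : ℝ → ℝ, Feasible r Es Bs T p → 0 < bCurve r p T → 0 < Bs T →
      (Bs τ / Bs T) * ((T - τ) / (T - τ + ε)) ≤ bCurve r pon T / bCurve r p T) := by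
  obtain ⟨hτ0, hτT⟩ := hτ
  obtain ⟨hpos, ⟨F, hF⟩, heq⟩ := hon
  have hd : (0:ℝ) < T - τ + ε := by linarith
  set f : ℝ → ℝ := fun s => r (pon s) with hf
  have hponτ0 : 0 ≤ pon τ := hpos τ ⟨hτ0.le, hτT⟩
  -- bound M on pon at continuity points
  set M : ℝ := Es T / ε with hM
  have hEsT0 : 0 ≤ Es T := hEs0 T ⟨hT.le, le_refl T⟩
  have hM0 : 0 ≤ M := div_nonneg hEsT0 hε.le
  have hbdd : ∀ t ∈ Set.Ico (0:ℝ) T, ContinuousAt pon t → pon t ≤ M := by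
    intro t ht hc
    have hEon : 0 ≤ eCurve pon t := by
      apply intervalIntegral.integral_nonneg ht.1
      intro u hu
      exact hpos u ⟨hu.1, lt_of_le_of_lt hu.2 ht.2⟩
    have hden : ε ≤ T - t + ε := by linarith [ht.2]
    have hdenpos : (0:ℝ) < T - t + ε := by linarith [ht.2]
    have h2 : (Es t - eCurve pon t) / (T - t + ε) ≤ M := by
      have hnum : Es t - eCurve pon t ≤ Es T := by
        have := hEsm ⟨ht.1, ht.2.le⟩ ⟨hT.le, le_refl T⟩ ht.2.le
        linarith
      exact div_le_div₀ hEsT0 hnum hε hden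
    calc pon t ≤ (Es t - eCurve pon t) / (T - t + ε) := by
          rw [heq t ht hc]; exact min_le_right _ _
      _ ≤ M := h2
  -- measurability
  have hmeas : AEMeasurable pon (volume.restrict (Set.Icc (0:ℝ) T)) := by
    have hs : MeasurableSet (Set.Ico (0:ℝ) T \ ↑F) :=
      measurableSet_Ico.diff (F.finite_toSet.measurableSet)
    have hcont : ContinuousOn pon (Set.Ico (0:ℝ) T \ ↑F) := fun x hx =>
      (hF x hx.1 hx.2).continuousWithinAt
    have h1 : AEMeasurable pon (volume.restrict (Set.Ico (0:ℝ) T \ ↑F)) :=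
      hcont.aemeasurable hs
    have hae : (Set.Ico (0:ℝ) T \ ↑F : Set ℝ) =ᵐ[volume] Set.Icc (0:ℝ) T := by
      rw [MeasureTheory.ae_eq_set]
      constructor
      · have h1 : (Set.Ico (0:ℝ) T \ ↑F) \ Set.Icc 0 T ⊆ ∅ := by
          rintro x ⟨⟨hx1, -⟩, hx2⟩
          exact (hx2 ⟨hx1.1, hx1.2.le⟩).elim
        exact measure_mono_null h1 measure_empty
      · refine measure_mono_null ?_ ((F.finite_toSet.insert T).measure_zero volume)
        rintro x ⟨hx1, hx2⟩
        by_cases hxF : x ∈ (↑F : Set ℝ)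
        · exact Set.mem_insert_of_mem _ hxF
        · have hxT : x = T := by
            by_contra hne
            exact hx2 ⟨⟨hx1.1, lt_of_le_of_ne hx1.2 hne⟩, hxF⟩
          exact hxT ▸ Set.mem_insert _ _
    rwa [Measure.restrict_congr_set hae] at h1
  have hfmeas : AEStronglyMeasurable f (volume.restrict (Set.Icc (0:ℝ) T)) :=
    (hr.cont.measurable.comp_aemeasurable hmeas).aestronglyMeasurable
  have hnullF : ∀ᵐ t ∂(volume.restrict (Set.Icc (0:ℝ) T)),
      t ∉ insert T (insert τ (↑F : Set ℝ)) := by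
    apply ae_restrict_of_ae
    rw [← MeasureTheory.measure_eq_zero_iff_ae_notMem]
    exact ((F.finite_toSet.insert τ).insert T).measure_zero volume
  -- interval integrability of f on [0,T]
  have hint : IntervalIntegrable f volume 0 T := by
    have hbound : ∀ᵐ t ∂(volume.restrict (Set.Icc (0:ℝ) T)), ‖f t‖ ≤ r M := by
      filter_upwards [ae_restrict_mem measurableSet_Icc, hnullF] with t ht htn
      simp only [Set.mem_insert_iff, not_or] at htn
      have htI : t ∈ Set.Ico (0:ℝ) T := ⟨ht.1, lt_of_le_of_ne ht.2 htn.1⟩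
      have hct : ContinuousAt pon t := hF t htI htn.2.2
      have h0 : 0 ≤ pon t := hpos t htI
      have h1 : pon t ≤ M := hbdd t htI hct
      have h2 : f t ≤ r M := by
        rcases eq_or_lt_of_le h1 with h | h
        · rw [hf]; simp [h]
        · exact (hr.mono h0 (Set.mem_Ici.mpr hM0) h).le
      have h3 : 0 ≤ f t := hr.nonneg _ h0
      rw [Real.norm_eq_abs, abs_of_nonneg h3]
      exact h2
    have hIcc : IntegrableOn f (Set.Icc (0:ℝ) T) volume :=
      ⟨hfmeas, MeasureTheory.HasFiniteIntegral.restrict_of_bounded (C := r M)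
        measure_Icc_lt_top hbound⟩
    have huIcc : Set.uIcc (0:ℝ) T = Set.Icc 0 T := Set.uIcc_of_le hT.le
    exact (huIcc ▸ hIcc).intervalIntegrable
  have hsub1 : Set.uIcc (0:ℝ) τ ⊆ Set.uIcc (0:ℝ) T := by
    rw [Set.uIcc_of_le hτ0.le, Set.uIcc_of_le hT.le]
    exact Set.Icc_subset_Icc_right hτT.le
  have hsub2 : Set.uIcc τ T ⊆ Set.uIcc (0:ℝ) T := by
    rw [Set.uIcc_of_le hτT.le, Set.uIcc_of_le hT.le]
    exact Set.Icc_subset_Icc_left hτ0.le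
  have hint1 : IntervalIntegrable f volume 0 τ := hint.mono_set hsub1
  have hint2 : IntervalIntegrable f volume τ T := hint.mono_set hsub2
  -- split the integral
  have hsplit : bCurve r pon T = bCurve r pon τ + ∫ s in τ..T, f s := by
    rw [bCurve, bCurve, ← intervalIntegral.integral_add_adjacent_intervals hint1 hint2]
  -- lower bound on the tail integral
  have htail : (T - τ) * r (pon τ) ≤ ∫ s in τ..T, f s := by
    have hmono_ae : (fun _ : ℝ => r (pon τ)) ≤ᵐ[volume.restrict (Set.Icc τ T)] f := by
      have hnull : ∀ᵐ t ∂(volume.restrict (Set.Icc τ T)),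
          t ∉ insert T (insert τ (↑F : Set ℝ)) := by
        apply ae_restrict_of_ae
        rw [← MeasureTheory.measure_eq_zero_iff_ae_notMem]
        exact ((F.finite_toSet.insert τ).insert T).measure_zero volume
      filter_upwards [ae_restrict_mem measurableSet_Icc, hnull] with t ht htn
      simp only [Set.mem_insert_iff, not_or] at htn
      have hτt : τ < t := lt_of_le_of_ne ht.1 (Ne.symm htn.2.1)
      have htT : t < T := lt_of_le_of_ne ht.2 htn.1
      have htI : t ∈ Set.Ico (0:ℝ) T := ⟨le_trans hτ0.le ht.1, htT⟩
      have hct : ContinuousAt pon t := hF t htI htn.2.2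
      have hle : pon τ ≤ pon t := hmono τ ⟨hτ0.le, hτT⟩ t htI hτt hcτ hct
      rcases eq_or_lt_of_le hle with h | h
      · rw [hf]; simp [h]
      · exact (hr.mono (Set.mem_Ici.mpr hponτ0)
          (Set.mem_Ici.mpr (hpos t htI)) h).le
    have := intervalIntegral.integral_mono_ae_restrict hτT.le
      (intervalIntegrable_const) hint2 hmono_ae
    rwa [intervalIntegral.integral_const, smul_eq_mul] at this
  -- B_on(τ) ≥ 0
  have hBonτ : 0 ≤ bCurve r pon τ := by
    apply intervalIntegral.integral_nonneg hτ0.le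
    intro u hu
    exact hr.nonneg _ (hpos u ⟨hu.1, lt_of_le_of_lt hu.2 hτT⟩)
  -- Part 1
  have hpart1 : ((T - τ) / (T - τ + ε)) * Bs τ ≤ bCurve r pon T := by
    have hkey : bCurve r pon τ + (T - τ) * ((Bs τ - bCurve r pon τ) / (T - τ + ε))
        ≤ bCurve r pon T := by
      have h := htail
      rw [hbranch] at h
      rw [hsplit]
      linarith
    have h2 : ((T - τ) / (T - τ + ε)) * Bs τ ≤
        bCurve r pon τ + (T - τ) * ((Bs τ - bCurve r pon τ) / (T - τ + ε)) := by
      rw [div_mul_eq_mul_div, div_le_iff₀ hd]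
      have expand : (bCurve r pon τ + (T - τ) * ((Bs τ - bCurve r pon τ) / (T - τ + ε)))
          * (T - τ + ε)
          = bCurve r pon τ * (T - τ + ε) + (T - τ) * (Bs τ - bCurve r pon τ) := by
        field_simp
      rw [expand]
      nlinarith [mul_nonneg hBonτ hε.le]
    linarith
  have hpart2 : ∀ p : ℝ → ℝ, Feasible r Es Bs T p → bCurve r p T ≤ Bs T := by
    intro p hp
    exact (hp.2.2 T ⟨hT.le, le_refl T⟩).2
  refine ⟨hpart1, hpart2, ?_⟩
  intro p hp hBoff hBsT
  have hBoffBsT : bCurve r p T ≤ Bs T := hpart2 p hp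
  have hBsτ : 0 ≤ Bs τ := hBs0 τ ⟨hτ0.le, hτT.le⟩
  have hc0 : 0 ≤ (T - τ) / (T - τ + ε) := div_nonneg (by linarith) hd.le
  have hnum0 : 0 ≤ ((T - τ) / (T - τ + ε)) * Bs τ := mul_nonneg hc0 hBsτ
  have hBon0 : 0 ≤ bCurve r pon T := le_trans hnum0 hpart1
  calc (Bs τ / Bs T) * ((T - τ) / (T - τ + ε))
      = (((T - τ) / (T - τ + ε)) * Bs τ) / Bs T := by ring
    _ ≤ bCurve r pon T / Bs T := by
        exact div_le_div_of_nonneg_right hpart1 hBsT.le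
    _ ≤ bCurve r pon T / bCurve r p T := by
        apply div_le_div_of_nonneg_left hBon0 hBoff hBoffBsT
end
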